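/- arXiv:1603.08494 — 4 statements merged into one kernel-verified Lean document; each statement's English description precedes it below -/
import Mathlib

section
/- If the first systems-focal point μ̂₁(a) (the first zero of τ̂' in (a,∞)) exists, then σ̂ > 0 on (a, μ̂₁(a)] and ρ̂(μ̂₁(a)) < 0. -/
open Set Filter MeasureTheory intervalIntegral

/-- `T4 r q y = (r y'')' - q y'`. -/
noncomputable def T4 (r q y : ℝ → ℝ) : ℝ → ℝ :=
  fun x => deriv (fun s => r s * deriv (deriv y) s) x - q x * deriv y x

/-- `y` solves `(r y'')'' - (q y')' = p y`, written as `(Ty)' = p y`. -/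
def IsSol4 (r p q y : ℝ → ℝ) : Prop :=
  ∀ x, deriv (T4 r q y) x = p x * y x

/-- `σ̂ = u v' - v u'`. -/
noncomputable def sigmaHat (u v : ℝ → ℝ) : ℝ → ℝ :=
  fun x => u x * deriv v x - v x * deriv u x

/-- `τ̂ = u ⬝ Tv - v ⬝ Tu`. -/
noncomputable def tauHat (r q u v : ℝ → ℝ) : ℝ → ℝ :=
  fun x => u x * T4 r q v x - v x * T4 r q u x

/-- `ρ̂ = u₁ ⬝ Tv - v₁ ⬝ Tu` where `y₁ = r y''`. -/
noncomputable def rhoHat (r q u v : ℝ → ℝ) : ℝ → ℝ :=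
  fun x => (r x * deriv (deriv u) x) * T4 r q v x - (r x * deriv (deriv v) x) * T4 r q u x

/-- Initial conditions of the fundamental solutions `u`, `v`:
`u(a) = u₁(a) = Tu(a) = 0`, `u'(a) = 1`, and `v(a) = v'(a) = v₁(a) = 0`, `Tv(a) = 1`. -/
def FundIC (r q : ℝ → ℝ) (a : ℝ) (u v : ℝ → ℝ) : Prop :=
  u a = 0 ∧ r a * deriv (deriv u) a = 0 ∧ T4 r q u a = 0 ∧ deriv u a = 1 ∧
  v a = 0 ∧ deriv v a = 0 ∧ r a * deriv (deriv v) a = 0 ∧ T4 r q v a = 1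

open Topology

section Aux

/-- Product rule when one factor vanishes at the point: only continuity of the
other factor is needed. -/
lemma hasDerivAt_mul_of_zero {f g : ℝ → ℝ} {f' x : ℝ} (hf : HasDerivAt f f' x)
    (h0 : f x = 0) (hg : ContinuousAt g x) :
    HasDerivAt (fun y => f y * g y) (f' * g x) x := by
  rw [hasDerivAt_iff_tendsto_slope] at hf ⊢
  have h1 : Tendsto g (𝓝[≠] x) (𝓝 (g x)) := hg.continuousWithinAt.tendsto
  have h2 := hf.mul h1
  refine h2.congr' ?_
  filter_upwards [self_mem_nhdsWithin] with y hy
  simp only [slope_def_field, h0, sub_zero]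
  ring

lemma eventually_ne_of_hasDerivAt_ne {f : ℝ → ℝ} {f' x : ℝ} (hf : HasDerivAt f f' x)
    (h0 : f x = 0) (h' : f' ≠ 0) : ∀ᶠ y in 𝓝[≠] x, f y ≠ 0 := by
  rw [hasDerivAt_iff_tendsto_slope] at hf
  have := hf.eventually_ne h'
  filter_upwards [this, self_mem_nhdsWithin] with y hy hy'
  intro h
  apply hy
  simp [slope_def_field, h, h0]

lemma deriv_nonpos_of_left_ge {f : ℝ → ℝ} {f' c a' : ℝ} (hf : HasDerivAt f f' c)
    (ha : a' < c) (hge : ∀ y ∈ Ioo a' c, f c ≤ f y) : f' ≤ 0 := by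
  rw [hasDerivAt_iff_tendsto_slope] at hf
  have h1 : Tendsto (slope f c) (𝓝[<] c) (𝓝 f') :=
    hf.mono_left (nhdsWithin_mono _ (fun y hy => ne_of_lt hy))
  refine le_of_tendsto h1 ?_
  filter_upwards [Ioo_mem_nhdsLT_of_mem ⟨ha, le_refl c⟩] with y hy
  have h2 := hge y hy
  have h3 : y - c < 0 := by linarith [hy.2]
  rw [slope_def_field, div_eq_mul_inv]
  apply mul_nonpos_of_nonneg_of_nonpos
  · linarith
  · exact inv_nonpos.mpr h3.le

/-- A function having a derivative `g y` at every `y` in a punctured neighborhood of `x`,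
with `f` and `g` continuous at `x`, has derivative `g x` at `x`. -/
lemma hasDerivAt_of_eventually_ne {f g : ℝ → ℝ} {x : ℝ}
    (h : ∀ᶠ y in 𝓝[≠] x, HasDerivAt f (g y) y)
    (hf : ContinuousAt f x) (hg : ContinuousAt g x) : HasDerivAt f (g x) x := by
  have hgt : ∀ᶠ y in 𝓝[>] x, HasDerivAt f (g y) y :=
    h.filter_mono (nhdsWithin_mono _ (fun y hy => ne_of_gt hy))
  have hlt : ∀ᶠ y in 𝓝[<] x, HasDerivAt f (g y) y :=
    h.filter_mono (nhdsWithin_mono _ (fun y hy => ne_of_lt hy))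
  have A : HasDerivWithinAt f (g x) (Ici x) x := by
    apply hasDerivWithinAt_Ici_of_tendsto_deriv
      (s := {y | HasDerivAt f (g y) y}) ?_ hf.continuousWithinAt hgt ?_
    · intro y hy
      exact hy.differentiableAt.differentiableWithinAt
    · have h1 : Tendsto g (𝓝[>] x) (𝓝 (g x)) := tendsto_inf_left hg
      apply h1.congr'
      filter_upwards [hgt] with y hy
      exact hy.deriv.symm
  have B : HasDerivWithinAt f (g x) (Iic x) x := by
    apply hasDerivWithinAt_Iic_of_tendsto_deriv
      (s := {y | HasDerivAt f (g y) y}) ?_ hf.continuousWithinAt hlt ?_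
    · intro y hy
      exact hy.differentiableAt.differentiableWithinAt
    · have h1 : Tendsto g (𝓝[<] x) (𝓝 (g x)) := tendsto_inf_left hg
      apply h1.congr'
      filter_upwards [hlt] with y hy
      exact hy.deriv.symm
  simpa using B.union A

lemma cd_step {f : ℝ → ℝ} {n : ℕ} (h : ContDiff ℝ (n + 1 : ℕ) f) :
    ContDiff ℝ (n : ℕ) (deriv f) := by
  have := contDiff_succ_iff_deriv.mp
    (show ContDiff ℝ ((n : WithTop ℕ∞) + 1) f by exact_mod_cast h)
  exact this.2.2

end Aux

set_option maxHeartbeats 1600000 in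
/-- If the first systems-focal point `μ̂₁(a) = b` (first zero of `τ̂'` in `(a, ∞)`)
exists, then `σ̂ > 0` on `(a, μ̂₁(a)]` and `ρ̂(μ̂₁(a)) < 0`. -/
theorem sigma_pos_rho_neg_at_first_focal
    (a b : ℝ) (r p q u v : ℝ → ℝ)
    (hrc : Continuous r) (hpc : Continuous p) (hqc : Continuous q)
    (hrpos : ∀ x ∈ Ici a, 0 < r x) (hppos : ∀ x ∈ Ici a, 0 < p x)
    (hu : ContDiff ℝ 4 u) (hv : ContDiff ℝ 4 v)
    (hru : ContDiff ℝ 2 (fun x => r x * deriv (deriv u) x))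
    (hrv : ContDiff ℝ 2 (fun x => r x * deriv (deriv v) x))
    (husol : IsSol4 r p q u) (hvsol : IsSol4 r p q v)
    (hic : FundIC r q a u v)
    (hb : a < b) (hbz : deriv (tauHat r q u v) b = 0)
    (hbmin : ∀ x ∈ Ioo a b, deriv (tauHat r q u v) x ≠ 0) :
    (∀ x ∈ Ioc a b, 0 < sigmaHat u v x) ∧ rhoHat r q u v b < 0 := by
  obtain ⟨hua, hu1a, hTua, hu'a, hva, hv'a, hv1a, hTva⟩ := hic
  -- iterated smoothness of u and v
  have hu3 : ContDiff ℝ 3 (deriv u) := cd_step (by exact_mod_cast hu)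
  have hu2 : ContDiff ℝ 2 (deriv (deriv u)) := cd_step (by exact_mod_cast hu3)
  have hu1 : ContDiff ℝ 1 (deriv (deriv (deriv u))) := cd_step (by exact_mod_cast hu2)
  have hu0 : Continuous (deriv (deriv (deriv (deriv u)))) :=
    (cd_step (n := 0) (by exact_mod_cast hu1)).continuous
  have hv3 : ContDiff ℝ 3 (deriv v) := cd_step (by exact_mod_cast hv)
  have hv2 : ContDiff ℝ 2 (deriv (deriv v)) := cd_step (by exact_mod_cast hv3)
  have hv1 : ContDiff ℝ 1 (deriv (deriv (deriv v))) := cd_step (by exact_mod_cast hv2)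
  have hv0 : Continuous (deriv (deriv (deriv (deriv v)))) :=
    (cd_step (n := 0) (by exact_mod_cast hv1)).continuous
  have hud : Differentiable ℝ u := hu.differentiable (by norm_num)
  have hu'd : Differentiable ℝ (deriv u) := hu3.differentiable (by norm_num)
  have hu''d : Differentiable ℝ (deriv (deriv u)) := hu2.differentiable (by norm_num)
  have hu'''d : Differentiable ℝ (deriv (deriv (deriv u))) := hu1.differentiable (by norm_num)
  have hvd : Differentiable ℝ v := hv.differentiable (by norm_num)
  have hv'd : Differentiable ℝ (deriv v) := hv3.differentiable (by norm_num)
  have hv''d : Differentiable ℝ (deriv (deriv v)) := hv2.differentiable (by norm_num)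
  have hv'''d : Differentiable ℝ (deriv (deriv (deriv v))) := hv1.differentiable (by norm_num)
  -- abbreviations
  set U1 : ℝ → ℝ := fun x => r x * deriv (deriv u) x with hU1def
  set V1 : ℝ → ℝ := fun x => r x * deriv (deriv v) x with hV1def
  have hU1d : Differentiable ℝ U1 := hru.differentiable (by norm_num)
  have hV1d : Differentiable ℝ V1 := hrv.differentiable (by norm_num)
  have hdU1 : ContDiff ℝ 1 (deriv U1) := cd_step (n := 1) (by exact_mod_cast hru)
  have hdV1 : ContDiff ℝ 1 (deriv V1) := cd_step (n := 1) (by exact_mod_cast hrv)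
  have hdU1d : Differentiable ℝ (deriv U1) := hdU1.differentiable (by norm_num)
  have hdV1d : Differentiable ℝ (deriv V1) := hdV1.differentiable (by norm_num)
  set Tu : ℝ → ℝ := T4 r q u with hTudef
  set Tv : ℝ → ℝ := T4 r q v with hTvdef
  have hTueq : ∀ x, Tu x = deriv U1 x - q x * deriv u x := fun _ => rfl
  have hTveq : ∀ x, Tv x = deriv V1 x - q x * deriv v x := fun _ => rfl
  have hTuc : Continuous Tu := by
    have : Tu = fun x => deriv U1 x - q x * deriv u x := funext hTueq
    rw [this]
    exact hdU1.continuous.sub (hqc.mul hu3.continuous)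
  have hTvc : Continuous Tv := by
    have : Tv = fun x => deriv V1 x - q x * deriv v x := funext hTveq
    rw [this]
    exact hdV1.continuous.sub (hqc.mul hv3.continuous)
  set W : ℝ → ℝ := fun x => deriv u x * Tv x - deriv v x * Tu x with hWdef
  have hWc : Continuous W := (hu3.continuous.mul hTvc).sub (hv3.continuous.mul hTuc)
  have hWa : W a = 1 := by
    rw [hWdef]
    simp only [hu'a, hv'a, hTua, hTva]
    ring
  set Tau : ℝ → ℝ := tauHat r q u v with hTaudef
  have hTaueq : ∀ x, Tau x = u x * Tv x - v x * Tu x := fun _ => rfl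
  have hTauc : Continuous Tau := by
    have : Tau = fun x => u x * Tv x - v x * Tu x := funext hTaueq
    rw [this]
    exact (hu.continuous.mul hTvc).sub (hv.continuous.mul hTuc)
  set Sg : ℝ → ℝ := sigmaHat u v with hSgdef
  have hSgeq : ∀ x, Sg x = u x * deriv v x - v x * deriv u x := fun _ => rfl
  have hSgc : Continuous Sg := by
    have : Sg = fun x => u x * deriv v x - v x * deriv u x := funext hSgeq
    rw [this]
    exact (hu.continuous.mul hv3.continuous).sub (hv.continuous.mul hu3.continuous)
  have hRhoeq : ∀ x, rhoHat r q u v x = U1 x * Tv x - V1 x * Tu x := fun _ => rfl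
  -- nondifferentiability of q * u' forces u to vanish (for x ≥ a)
  have hDu : ∀ x ∈ Ici a, ¬ DifferentiableAt ℝ (fun y => q y * deriv u y) x → u x = 0 := by
    intro x hx hnd
    have hTund : ¬ DifferentiableAt ℝ Tu x := by
      intro hd
      apply hnd
      have heq : (fun y => q y * deriv u y) = fun y => deriv U1 y - Tu y := by
        funext y; rw [hTueq y]; ring
      rw [heq]
      exact (hdU1d x).sub hd
    have h0 : deriv Tu x = 0 := deriv_zero_of_not_differentiableAt hTund
    have h1 : deriv Tu x = p x * u x := husol x
    have h2 : p x * u x = 0 := by rw [← h1, h0]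
    rcases mul_eq_zero.mp h2 with h | h
    · exact absurd h (ne_of_gt (hppos x hx))
    · exact h
  have hDv : ∀ x ∈ Ici a, ¬ DifferentiableAt ℝ (fun y => q y * deriv v y) x → v x = 0 := by
    intro x hx hnd
    have hTvnd : ¬ DifferentiableAt ℝ Tv x := by
      intro hd
      apply hnd
      have heq : (fun y => q y * deriv v y) = fun y => deriv V1 y - Tv y := by
        funext y; rw [hTveq y]; ring
      rw [heq]
      exact (hdV1d x).sub hd
    have h0 : deriv Tv x = 0 := deriv_zero_of_not_differentiableAt hTvnd
    have h1 : deriv Tv x = p x * v x := hvsol x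
    have h2 : p x * v x = 0 := by rw [← h1, h0]
    rcases mul_eq_zero.mp h2 with h | h
    · exact absurd h (ne_of_gt (hppos x hx))
    · exact h
  -- derivative of Tau in the differentiable case
  have hTauD : ∀ x, DifferentiableAt ℝ (fun y => q y * deriv u y) x →
      DifferentiableAt ℝ (fun y => q y * deriv v y) x → HasDerivAt Tau (W x) x := by
    intro x hqu hqv
    have hTuD : HasDerivAt Tu (p x * u x) x := by
      have hdiff : DifferentiableAt ℝ Tu x := by
        have heq : Tu = fun y => deriv U1 y - q y * deriv u y := funext hTueq
        rw [heq]; exact (hdU1d x).sub hqu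
      have := hdiff.hasDerivAt
      rwa [husol x] at this
    have hTvD : HasDerivAt Tv (p x * v x) x := by
      have hdiff : DifferentiableAt ℝ Tv x := by
        have heq : Tv = fun y => deriv V1 y - q y * deriv v y := funext hTveq
        rw [heq]; exact (hdV1d x).sub hqv
      have := hdiff.hasDerivAt
      rwa [hvsol x] at this
    have h1 : HasDerivAt (fun y => u y * Tv y)
        (deriv u x * Tv x + u x * (p x * v x)) x := ((hud x).hasDerivAt.mul hTvD)
    have h2 : HasDerivAt (fun y => v y * Tu y)
        (deriv v x * Tu x + v x * (p x * u x)) x := ((hvd x).hasDerivAt.mul hTuD)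
    have h3 := h1.sub h2
    have : HasDerivAt Tau
        (deriv u x * Tv x + u x * (p x * v x) - (deriv v x * Tu x + v x * (p x * u x))) x := h3
    convert this using 1
    rw [hWdef]; ring
  -- derivative of Tau when both u and v vanish
  have hTauD0 : ∀ x, u x = 0 → v x = 0 → HasDerivAt Tau (W x) x := by
    intro x hux hvx
    have h1 : HasDerivAt (fun y => u y * Tv y) (deriv u x * Tv x) x :=
      hasDerivAt_mul_of_zero (hud x).hasDerivAt hux hTvc.continuousAt
    have h2 : HasDerivAt (fun y => v y * Tu y) (deriv v x * Tu x) x :=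
      hasDerivAt_mul_of_zero (hvd x).hasDerivAt hvx hTuc.continuousAt
    exact h1.sub h2
  -- bad cases: Tau is not differentiable
  have hbad1 : ∀ x ∈ Ici a, ¬ DifferentiableAt ℝ (fun y => q y * deriv u y) x →
      v x ≠ 0 → ¬ DifferentiableAt ℝ Tau x := by
    intro x hx hqu hvx hTaud
    have hqv : DifferentiableAt ℝ (fun y => q y * deriv v y) x := by
      by_contra h; exact hvx (hDv x hx h)
    have hTvd : DifferentiableAt ℝ Tv x := by
      have heq : Tv = fun y => deriv V1 y - q y * deriv v y := funext hTveq
      rw [heq]; exact (hdV1d x).sub hqv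
    have hA : DifferentiableAt ℝ (fun y => v y * (q y * deriv u y)) x := by
      have heq : (fun y => v y * (q y * deriv u y)) =
          fun y => Tau y - u y * Tv y + v y * deriv U1 y := by
        funext y; rw [hTaueq y, hTueq y]; ring
      rw [heq]
      exact (hTaud.sub ((hud x).mul hTvd)).add ((hvd x).mul (hdU1d x))
    apply hqu
    have h2 : DifferentiableAt ℝ (fun y => (v y * (q y * deriv u y)) * (v y)⁻¹) x :=
      hA.mul ((hvd x).inv hvx)
    apply h2.congr_of_eventuallyEq
    have hev : ∀ᶠ y in 𝓝 x, v y ≠ 0 := hv.continuous.continuousAt.eventually_ne hvx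
    filter_upwards [hev] with y hy
    field_simp
  have hbad2 : ∀ x ∈ Ici a, ¬ DifferentiableAt ℝ (fun y => q y * deriv v y) x →
      u x ≠ 0 → ¬ DifferentiableAt ℝ Tau x := by
    intro x hx hqv hux hTaud
    have hqu : DifferentiableAt ℝ (fun y => q y * deriv u y) x := by
      by_contra h; exact hux (hDu x hx h)
    have hTud : DifferentiableAt ℝ Tu x := by
      have heq : Tu = fun y => deriv U1 y - q y * deriv u y := funext hTueq
      rw [heq]; exact (hdU1d x).sub hqu
    have hA : DifferentiableAt ℝ (fun y => u y * (q y * deriv v y)) x := by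
      have heq : (fun y => u y * (q y * deriv v y)) =
          fun y => u y * deriv V1 y - v y * Tu y - Tau y := by
        funext y; rw [hTaueq y, hTveq y]; ring
      rw [heq]
      exact (((hud x).mul (hdV1d x)).sub ((hvd x).mul hTud)).sub hTaud
    apply hqv
    have h2 : DifferentiableAt ℝ (fun y => (u y * (q y * deriv v y)) * (u y)⁻¹) x :=
      hA.mul ((hud x).inv hux)
    apply h2.congr_of_eventuallyEq
    have hev : ∀ᶠ y in 𝓝 x, u y ≠ 0 := hu.continuous.continuousAt.eventually_ne hux
    filter_upwards [hev] with y hy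
    field_simp
  -- main dichotomy
  have hMAIN : ∀ x ∈ Ici a, HasDerivAt Tau (W x) x ∨
      (((u x = 0 ∧ v x ≠ 0) ∨ (v x = 0 ∧ u x ≠ 0)) ∧ ¬ DifferentiableAt ℝ Tau x) := by
    intro x hx
    by_cases hqu : DifferentiableAt ℝ (fun y => q y * deriv u y) x
    · by_cases hqv : DifferentiableAt ℝ (fun y => q y * deriv v y) x
      · exact Or.inl (hTauD x hqu hqv)
      · have hvx := hDv x hx hqv
        by_cases hux : u x = 0
        · exact Or.inl (hTauD0 x hux hvx)
        · exact Or.inr ⟨Or.inr ⟨hvx, hux⟩, hbad2 x hx hqv hux⟩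
    · have hux := hDu x hx hqu
      by_cases hvx : v x = 0
      · exact Or.inl (hTauD0 x hux hvx)
      · exact Or.inr ⟨Or.inl ⟨hux, hvx⟩, hbad1 x hx hqu hvx⟩
  have hM1 : ∀ x ∈ Ioo a b, HasDerivAt Tau (W x) x := by
    intro x hx
    rcases hMAIN x (le_of_lt hx.1) with h | h
    · exact h
    · exact absurd (deriv_zero_of_not_differentiableAt h.2) (hbmin x hx)
  have hW1 : ∀ x ∈ Ioo a b, W x ≠ 0 := by
    intro x hx h
    exact hbmin x hx (by rw [(hM1 x hx).deriv]; exact h)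
  have hWpos : ∀ x ∈ Ioo a b, 0 < W x := by
    intro x hx
    by_contra hle
    push_neg at hle
    have hlt : W x < 0 := lt_of_le_of_ne hle (hW1 x hx)
    have hsub : Icc (W x) (W a) ⊆ W '' Icc a x :=
      intermediate_value_Icc' (le_of_lt hx.1) hWc.continuousOn
    have h0 : (0 : ℝ) ∈ Icc (W x) (W a) := ⟨hlt.le, by rw [hWa]; norm_num⟩
    obtain ⟨z, hz, hz0⟩ := hsub h0
    have hza : z ≠ a := by intro h; rw [h, hWa] at hz0; norm_num at hz0
    have hzx : z ≠ x := by intro h; rw [h] at hz0; exact (hW1 x hx) hz0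
    exact hW1 z ⟨lt_of_le_of_ne hz.1 (Ne.symm hza),
      lt_of_lt_of_le (lt_of_le_of_ne hz.2 hzx) hx.2.le⟩ hz0
  have hWb : 0 ≤ W b := by
    refine ge_of_tendsto ((hWc.continuousAt (x := b)).mono_left
      (nhdsWithin_le_nhds (s := Iio b))) ?_
    filter_upwards [Ioo_mem_nhdsLT_of_mem (⟨hb, le_refl b⟩ : b ∈ Ioc a b)] with y hy
    exact (hWpos y hy).le
  -- Tau is positive on (a, b]
  have hTaua : Tau a = 0 := by rw [hTaueq a, hua, hva]; ring
  have hTaumono : StrictMonoOn Tau (Icc a b) := by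
    apply strictMonoOn_of_deriv_pos (convex_Icc a b) hTauc.continuousOn
    intro x hx
    rw [interior_Icc] at hx
    rw [(hM1 x hx).deriv]
    exact hWpos x hx
  have hTaupos : ∀ x ∈ Ioc a b, 0 < Tau x := by
    intro x hx
    have h1 := hTaumono (left_mem_Icc.2 hb.le) ⟨hx.1.le, hx.2⟩ hx.1
    rwa [hTaua] at h1
  -- Eta and its derivative
  set Eta : ℝ → ℝ := fun x => deriv u x * V1 x - deriv v x * U1 x with hEtadef
  have hEtac : Continuous Eta := (hu3.continuous.mul hrv.continuous).sub
    (hv3.continuous.mul hru.continuous)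
  have hEtaD : ∀ x, HasDerivAt Eta (W x) x := by
    intro x
    have h1 : HasDerivAt (fun y => deriv u y * V1 y)
        (deriv (deriv u) x * V1 x + deriv u x * deriv V1 x) x :=
      (hu'd x).hasDerivAt.mul (hV1d x).hasDerivAt
    have h2 : HasDerivAt (fun y => deriv v y * U1 y)
        (deriv (deriv v) x * U1 x + deriv v x * deriv U1 x) x :=
      (hv'd x).hasDerivAt.mul (hU1d x).hasDerivAt
    have h3 := h1.fun_sub h2
    refine h3.congr_deriv ?_
    simp only [hWdef, hTueq, hTveq, hU1def, hV1def]
    ring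
  have hEtaa : Eta a = 0 := by
    rw [hEtadef]
    simp only [hu'a, hv'a]
    have h1 : V1 a = 0 := hv1a
    have h2 : U1 a = 0 := hu1a
    rw [h1, h2]
    ring
  have hEtaTau : ∀ x ∈ Icc a b, Eta x = Tau x := by
    have hgc : ContinuousOn (fun y => Eta y - Tau y) (Icc a b) :=
      (hEtac.sub hTauc).continuousOn
    have hgd : DifferentiableOn ℝ (fun y => Eta y - Tau y) (interior (Icc a b)) := by
      rw [interior_Icc]
      intro x hx
      exact (((hEtaD x).sub (hM1 x hx)).differentiableAt).differentiableWithinAt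
    have hg0 : ∀ x ∈ interior (Icc a b), deriv (fun y => Eta y - Tau y) x = 0 := by
      rw [interior_Icc]
      intro x hx
      have := ((hEtaD x).fun_sub (hM1 x hx)).deriv
      simpa using this
    have hmono : MonotoneOn (fun y => Eta y - Tau y) (Icc a b) :=
      monotoneOn_of_deriv_nonneg (convex_Icc a b) hgc hgd (fun x hx => (hg0 x hx).ge)
    have hanti : AntitoneOn (fun y => Eta y - Tau y) (Icc a b) :=
      antitoneOn_of_deriv_nonpos (convex_Icc a b) hgc hgd (fun x hx => (hg0 x hx).le)
    intro x hx
    have h1 := hmono (left_mem_Icc.2 hb.le) hx hx.1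
    have h2 := hanti (left_mem_Icc.2 hb.le) hx hx.1
    have h3 : Eta x - Tau x = Eta a - Tau a := le_antisymm h2 h1
    rw [hEtaa, hTaua] at h3
    linarith [h3]
  -- derivative of Sg
  have hSgD : ∀ x, HasDerivAt Sg
      (u x * deriv (deriv v) x - v x * deriv (deriv u) x) x := by
    intro x
    have h1 : HasDerivAt (fun y => u y * deriv v y)
        (deriv u x * deriv v x + u x * deriv (deriv v) x) x :=
      (hud x).hasDerivAt.mul (hv'd x).hasDerivAt
    have h2 : HasDerivAt (fun y => v y * deriv u y)
        (deriv v x * deriv u x + v x * deriv (deriv u) x) x :=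
      (hvd x).hasDerivAt.mul (hu'd x).hasDerivAt
    have h3 := h1.fun_sub h2
    refine h3.congr_deriv ?_
    ring
  -- Plucker identity
  have hPl : ∀ x, Sg x * rhoHat r q u v x - (u x * V1 x - v x * U1 x) * W x
      + Tau x * Eta x = 0 := by
    intro x
    simp only [hSgeq, hRhoeq, hTaueq, hWdef, hEtadef]
    ring
  -- initial values of second derivatives
  have hra : 0 < r a := hrpos a (le_refl a)
  have hu''a : deriv (deriv u) a = 0 := by
    rcases mul_eq_zero.mp hu1a with h | h
    · exact absurd h (ne_of_gt hra)
    · exact h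
  have hv''a : deriv (deriv v) a = 0 := by
    rcases mul_eq_zero.mp hv1a with h | h
    · exact absurd h (ne_of_gt hra)
    · exact h
  have hdV1a : deriv V1 a = 1 := by
    have h := hTveq a
    rw [hTva, hv'a] at h
    linarith [h]
  have hv'''a : deriv (deriv (deriv v)) a = (r a)⁻¹ := by
    have h1 : HasDerivAt (fun y => V1 y * (r y)⁻¹) (deriv V1 a * (r a)⁻¹) a := by
      apply hasDerivAt_mul_of_zero (hV1d a).hasDerivAt (show V1 a = 0 from hv1a)
      exact (hrc.continuousAt).inv₀ (ne_of_gt hra)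
    have hev : (fun y => V1 y * (r y)⁻¹) =ᶠ[𝓝 a] deriv (deriv v) := by
      have hev0 : ∀ᶠ y in 𝓝 a, r y ≠ 0 := hrc.continuousAt.eventually_ne (ne_of_gt hra)
      filter_upwards [hev0] with y hy
      simp only [hV1def]
      field_simp
    have h2 : HasDerivAt (deriv (deriv v)) (deriv V1 a * (r a)⁻¹) a :=
      h1.congr_of_eventuallyEq hev.symm
    have h3 := h2.deriv
    rwa [hdV1a, one_mul] at h3
  -- the chain of derivatives of Sg
  set s1 : ℝ → ℝ := fun x => u x * deriv (deriv v) x - v x * deriv (deriv u) x with hs1def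
  set s2 : ℝ → ℝ := fun x => deriv u x * deriv (deriv v) x - deriv v x * deriv (deriv u) x
    + (u x * deriv (deriv (deriv v)) x - v x * deriv (deriv (deriv u)) x) with hs2def
  set s3 : ℝ → ℝ := fun x => 2 * (deriv u x * deriv (deriv (deriv v)) x
      - deriv v x * deriv (deriv (deriv u)) x)
    + (u x * deriv (deriv (deriv (deriv v))) x - v x * deriv (deriv (deriv (deriv u))) x)
    with hs3def
  have hs1c : Continuous s1 := by
    rw [hs1def]
    exact (hu.continuous.mul hv2.continuous).sub (hv.continuous.mul hu2.continuous)
  have hs2c : Continuous s2 := by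
    rw [hs2def]
    exact ((hu3.continuous.mul hv2.continuous).sub (hv3.continuous.mul hu2.continuous)).add
      ((hu.continuous.mul hv1.continuous).sub (hv.continuous.mul hu1.continuous))
  have hs3c : Continuous s3 := by
    rw [hs3def]
    exact (continuous_const.mul ((hu3.continuous.mul hv1.continuous).sub
      (hv3.continuous.mul hu1.continuous))).add
      ((hu.continuous.mul hv0).sub (hv.continuous.mul hu0))
  have hs1D : ∀ x, HasDerivAt s1 (s2 x) x := by
    intro x
    have h1 := (hud x).hasDerivAt.mul (hv''d x).hasDerivAt
    have h2 := (hvd x).hasDerivAt.mul (hu''d x).hasDerivAt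
    have h3 := h1.fun_sub h2
    refine h3.congr_deriv ?_
    simp only [hs2def]
    ring
  have hs2D : ∀ x, HasDerivAt s2 (s3 x) x := by
    intro x
    have h1 := (hu'd x).hasDerivAt.mul (hv''d x).hasDerivAt
    have h2 := (hv'd x).hasDerivAt.mul (hu''d x).hasDerivAt
    have h3 := (hud x).hasDerivAt.mul (hv'''d x).hasDerivAt
    have h4 := (hvd x).hasDerivAt.mul (hu'''d x).hasDerivAt
    have h5 := (h1.fun_sub h2).fun_add (h3.fun_sub h4)
    refine h5.congr_deriv ?_
    simp only [hs3def]
    ring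
  have hs3a : 0 < s3 a := by
    have h : s3 a = 2 * (r a)⁻¹ := by
      simp only [hs3def, hu'a, hv'a, hua, hva, hv'''a]
      ring
    rw [h]
    positivity
  -- positivity of Sg just to the right of a
  obtain ⟨ε, hε, hballs⟩ : ∃ ε > 0, Metric.ball a ε ⊆ s3 ⁻¹' (Ioi 0) :=
    Metric.mem_nhds_iff.mp (hs3c.continuousAt.preimage_mem_nhds (Ioi_mem_nhds hs3a))
  set e := min (a + ε / 2) b with hedef
  have hae : a < e := lt_min (by linarith) hb
  have heb : e ≤ b := min_le_right _ _
  have hs3pos : ∀ y ∈ Icc a e, 0 < s3 y := by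
    intro y hy
    have h1 : y ≤ a + ε / 2 := le_trans hy.2 (min_le_left _ _)
    have h2 : y ∈ Metric.ball a ε := by
      rw [Metric.mem_ball, Real.dist_eq, abs_sub_lt_iff]
      constructor <;> linarith [hy.1]
    exact hballs h2
  have hs2pos : ∀ x ∈ Ioc a e, 0 < s2 x := by
    have hmono : StrictMonoOn s2 (Icc a e) := by
      apply strictMonoOn_of_deriv_pos (convex_Icc a e) hs2c.continuousOn
      intro x hx
      rw [interior_Icc] at hx
      rw [(hs2D x).deriv]
      exact hs3pos x ⟨hx.1.le, hx.2.le⟩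
    intro x hx
    have h2a : s2 a = 0 := by
      simp only [hs2def, hua, hva, hv'a, hv''a, hu''a]
      ring
    have := hmono (left_mem_Icc.2 hae.le) ⟨hx.1.le, hx.2⟩ hx.1
    rwa [h2a] at this
  have hs1pos : ∀ x ∈ Ioc a e, 0 < s1 x := by
    have hmono : StrictMonoOn s1 (Icc a e) := by
      apply strictMonoOn_of_deriv_pos (convex_Icc a e) hs1c.continuousOn
      intro x hx
      rw [interior_Icc] at hx
      rw [(hs1D x).deriv]
      exact hs2pos x ⟨hx.1, hx.2.le⟩
    intro x hx
    have h1a : s1 a = 0 := by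
      simp only [hs1def, hua, hva]
      ring
    have := hmono (left_mem_Icc.2 hae.le) ⟨hx.1.le, hx.2⟩ hx.1
    rwa [h1a] at this
  have hSga : Sg a = 0 := by
    rw [hSgeq a, hua, hva]
    ring
  have hSgpos0 : ∀ x ∈ Ioc a e, 0 < Sg x := by
    have hmono : StrictMonoOn Sg (Icc a e) := by
      apply strictMonoOn_of_deriv_pos (convex_Icc a e) hSgc.continuousOn
      intro x hx
      rw [interior_Icc] at hx
      rw [(hSgD x).deriv]
      exact hs1pos x ⟨hx.1, hx.2.le⟩
    intro x hx
    have := hmono (left_mem_Icc.2 hae.le) ⟨hx.1.le, hx.2⟩ hx.1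
    rwa [hSga] at this
  -- global positivity of Sg on (a, b]
  have hSgpos : ∀ x ∈ Ioc a b, 0 < Sg x := by
    by_contra hcon
    push_neg at hcon
    obtain ⟨x0, hx0, hx0le⟩ := hcon
    set S : Set ℝ := {x | x ∈ Ioc a b ∧ Sg x ≤ 0} with hSdef
    have hx0S : x0 ∈ S := ⟨hx0, hx0le⟩
    have hSne : S.Nonempty := ⟨x0, hx0S⟩
    have hSbd : BddBelow S := ⟨a, fun y hy => hy.1.1.le⟩
    set c := sInf S with hcdef
    have hce : e ≤ c := by
      apply le_csInf hSne
      intro y hy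
      by_contra hlt
      push_neg at hlt
      exact absurd hy.2 (not_le.2 (hSgpos0 y ⟨hy.1.1, hlt.le⟩))
    have hac : a < c := lt_of_lt_of_le hae hce
    have hcb : c ≤ b := le_trans (csInf_le hSbd hx0S) hx0.2
    have hSgcle : Sg c ≤ 0 := by
      have h1 : c ∈ closure S := csInf_mem_closure hSne hSbd
      have h2 : IsClosed {x | Sg x ≤ 0} := isClosed_le hSgc continuous_const
      have h3 : closure S ⊆ {x | Sg x ≤ 0} := closure_minimal (fun y hy => hy.2) h2
      exact h3 h1
    have hposl : ∀ y ∈ Ioo a c, 0 < Sg y := by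
      intro y hy
      by_contra hle2
      push_neg at hle2
      have hyS : y ∈ S := ⟨⟨hy.1, le_trans hy.2.le hcb⟩, hle2⟩
      exact absurd (csInf_le hSbd hyS) (not_le.2 hy.2)
    have hSgcge : 0 ≤ Sg c := by
      refine ge_of_tendsto ((hSgc.continuousAt (x := c)).mono_left
        (nhdsWithin_le_nhds (s := Iio c))) ?_
      filter_upwards [Ioo_mem_nhdsLT_of_mem (⟨hac, le_refl c⟩ : c ∈ Ioc a c)] with y hy
      exact (hposl y hy).le
    have hSgc0 : Sg c = 0 := le_antisymm hSgcle hSgcge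
    have hs'le : u c * deriv (deriv v) c - v c * deriv (deriv u) c ≤ 0 := by
      apply deriv_nonpos_of_left_ge (hSgD c) hac
      intro y hy
      rw [hSgc0]
      exact (hposl y hy).le
    have hWcge : 0 ≤ W c := by
      rcases lt_or_eq_of_le hcb with h | h
      · exact (hWpos c ⟨hac, h⟩).le
      · rw [h]; exact hWb
    have htc : 0 < Tau c := hTaupos c ⟨hac, hcb⟩
    have hP := hPl c
    have hEt : Eta c = Tau c := hEtaTau c ⟨hac.le, hcb⟩
    have hid : u c * V1 c - v c * U1 c
        = r c * (u c * deriv (deriv v) c - v c * deriv (deriv u) c) := by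
      simp only [hU1def, hV1def]
      ring
    rw [hSgc0, hEt, hid] at hP
    have hrcpos : 0 < r c := hrpos c hac.le
    have h1 : r c * (u c * deriv (deriv v) c - v c * deriv (deriv u) c) ≤ 0 :=
      mul_nonpos_of_nonneg_of_nonpos hrcpos.le hs'le
    have h2 : r c * (u c * deriv (deriv v) c - v c * deriv (deriv u) c) * W c ≤ 0 :=
      mul_nonpos_of_nonpos_of_nonneg h1 hWcge
    have h3 : Tau c * Tau c ≤ 0 := by linarith [hP]
    exact absurd h3 (not_le.2 (mul_pos htc htc))
  have hSgposb : 0 < Sg b := hSgpos b ⟨hb, le_refl b⟩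
  -- W vanishes at b
  have hWb0 : W b = 0 := by
    rcases hMAIN b hb.le with h | ⟨hcase, hnd⟩
    · rw [← h.deriv]; exact hbz
    · have hev : ∀ᶠ y in 𝓝[≠] b, u y ≠ 0 ∧ v y ≠ 0 := by
        rcases hcase with ⟨hub, hvb⟩ | ⟨hvb, hub⟩
        · have hu'b : deriv u b ≠ 0 := by
            intro h
            have hcopy := hSgposb
            rw [hSgeq b, hub, h] at hcopy
            simp at hcopy
          exact (eventually_ne_of_hasDerivAt_ne (hud b).hasDerivAt hub hu'b).and
            ((hv.continuous.continuousAt.eventually_ne hvb).filter_mono nhdsWithin_le_nhds)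
        · have hv'b : deriv v b ≠ 0 := by
            intro h
            have hcopy := hSgposb
            rw [hSgeq b, hvb, h] at hcopy
            simp at hcopy
          exact ((hu.continuous.continuousAt.eventually_ne hub).filter_mono
            nhdsWithin_le_nhds).and
            (eventually_ne_of_hasDerivAt_ne (hvd b).hasDerivAt hvb hv'b)
      have hIci : ∀ᶠ y in 𝓝[≠] b, a < y :=
        (eventually_gt_nhds hb).filter_mono nhdsWithin_le_nhds
      have hDb : HasDerivAt Tau (W b) b := by
        apply hasDerivAt_of_eventually_ne ?_ hTauc.continuousAt hWc.continuousAt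
        filter_upwards [hev, hIci] with y hy hya
        have hqu : DifferentiableAt ℝ (fun s => q s * deriv u s) y := by
          by_contra h; exact hy.1 (hDu y hya.le h)
        have hqv : DifferentiableAt ℝ (fun s => q s * deriv v s) y := by
          by_contra h; exact hy.2 (hDv y hya.le h)
        exact hTauD y hqu hqv
      rw [← hDb.deriv]; exact hbz
  -- conclusion
  refine ⟨hSgpos, ?_⟩
  have hP := hPl b
  have hEt : Eta b = Tau b := hEtaTau b ⟨hb.le, le_refl b⟩
  have htb : 0 < Tau b := hTaupos b ⟨hb, le_refl b⟩
  rw [hWb0, hEt] at hP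
  have h1 : Sg b * rhoHat r q u v b = -(Tau b * Tau b) := by linarith [hP]
  by_contra hge
  push_neg at hge
  have h2 : 0 ≤ Sg b * rhoHat r q u v b := mul_nonneg hSgposb.le hge
  have h3 := mul_pos htb htb
  linarith
end

section
/- If both the first zero μ̂₁(a) and the second zero μ̂₂(a) of τ̂' in (a,∞) exist, then μ̂₁(a) is a simple zero, μ̂₁(a) < μ̂₂(a), and σ̂ vanishes somewhere in (μ̂₁(a), μ̂₂(a)]. -/
open Set Filter MeasureTheory intervalIntegral

open Topology

/-- `w24 = u' Tv - v' Tu`, the derivative of `τ̂`. -/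
noncomputable def w24Aux (r q u v : ℝ → ℝ) (x : ℝ) : ℝ :=
  deriv u x * T4 r q v x - deriv v x * T4 r q u x

/-- `w13 = u v₁ - v u₁ = r σ̂'`. -/
noncomputable def w13Aux (r u v : ℝ → ℝ) (x : ℝ) : ℝ :=
  u x * (r x * deriv (deriv v) x) - v x * (r x * deriv (deriv u) x)

/-- `w23 = u' v₁ - v' u₁`. -/
noncomputable def w23Aux (r u v : ℝ → ℝ) (x : ℝ) : ℝ :=
  deriv u x * (r x * deriv (deriv v) x) - deriv v x * (r x * deriv (deriv u) x)

lemma cluster_zero {f : ℝ → ℝ} (hf : Continuous f) {x₀ : ℝ}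
    (h : x₀ ∈ closure {x | x ≠ x₀ ∧ f x = 0}) : f x₀ = 0 := by
  have h1 : closure {x | x ≠ x₀ ∧ f x = 0} ⊆ f ⁻¹' {0} :=
    closure_minimal (fun x hx => hx.2) (isClosed_singleton.preimage hf)
  exact h1 h

lemma cluster_deriv_zero {f : ℝ → ℝ} (hf : Differentiable ℝ f) {x₀ : ℝ}
    (h : x₀ ∈ closure {x | x ≠ x₀ ∧ f x = 0}) : deriv f x₀ = 0 := by
  have hfx := cluster_zero hf.continuous h
  have hne : (𝓝[{x | x ≠ x₀ ∧ f x = 0}] x₀).NeBot := mem_closure_iff_nhdsWithin_neBot.mp h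
  have h1 : Tendsto (slope f x₀) (𝓝[{x | x ≠ x₀ ∧ f x = 0}] x₀) (𝓝 (deriv f x₀)) :=
    (hasDerivAt_iff_tendsto_slope.mp (hf x₀).hasDerivAt).mono_left
      (nhdsWithin_mono _ (fun x hx => hx.1))
  have h2 : Tendsto (slope f x₀) (𝓝[{x | x ≠ x₀ ∧ f x = 0}] x₀) (𝓝 0) := by
    refine Tendsto.congr' ?_ tendsto_const_nhds
    filter_upwards [self_mem_nhdsWithin] with x hx
    simp [slope_def_field, hx.2, hfx]
  exact tendsto_nhds_unique h1 h2

lemma cluster_rolle {f : ℝ → ℝ} (hf : Differentiable ℝ f) {x₀ : ℝ}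
    (h : x₀ ∈ closure {x | x ≠ x₀ ∧ f x = 0}) :
    x₀ ∈ closure {x | x ≠ x₀ ∧ deriv f x = 0} := by
  have hfx := cluster_zero hf.continuous h
  rw [Metric.mem_closure_iff] at h ⊢
  intro ε hε
  obtain ⟨x, hx, hdist⟩ := h ε hε
  rw [Real.dist_eq] at hdist
  rcases hx.1.lt_or_gt with hlt | hlt
  · obtain ⟨c, hc, hc0⟩ := exists_deriv_eq_zero hlt hf.continuous.continuousOn
      (hx.2.trans hfx.symm)
    refine ⟨c, ⟨hc.2.ne, hc0⟩, ?_⟩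
    rw [Real.dist_eq]
    rw [abs_lt] at hdist ⊢
    constructor <;> [linarith [hc.1, hc.2]; linarith [hc.1, hc.2]]
  · obtain ⟨c, hc, hc0⟩ := exists_deriv_eq_zero hlt hf.continuous.continuousOn
      (hfx.trans hx.2.symm)
    refine ⟨c, ⟨hc.1.ne', hc0⟩, ?_⟩
    rw [Real.dist_eq]
    rw [abs_lt] at hdist ⊢
    constructor <;> [linarith [hc.1, hc.2]; linarith [hc.1, hc.2]]

lemma cont_T4 {r q y : ℝ → ℝ} (hqc : Continuous q) (hy : ContDiff ℝ 4 y)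
    (hry : ContDiff ℝ 2 (fun x => r x * deriv (deriv y) x)) :
    Continuous (T4 r q y) := by
  have hy3 : ContDiff ℝ 3 (deriv y) :=
    ((contDiff_succ_iff_deriv (n := 3)).mp (by exact_mod_cast hy)).2.2
  have hg : ContDiff ℝ 1 (deriv (fun s => r s * deriv (deriv y) s)) :=
    ((contDiff_succ_iff_deriv (n := 1)).mp (by exact_mod_cast hry)).2.2
  exact hg.continuous.sub (hqc.mul hy3.continuous)

lemma hasDerivAt_r_dd {r q y : ℝ → ℝ}
    (hry : ContDiff ℝ 2 (fun x => r x * deriv (deriv y) x)) (x : ℝ) :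
    HasDerivAt (fun s => r s * deriv (deriv y) s) (T4 r q y x + q x * deriv y x) x := by
  have h := ((hry.differentiable (by norm_num)) x).hasDerivAt
  refine h.congr_deriv ?_
  simp [T4]

lemma hasDerivAt_T4 {a : ℝ} {r p q y : ℝ → ℝ}
    (hpc : Continuous p) (hqc : Continuous q)
    (hppos : ∀ x ∈ Ici a, 0 < p x)
    (hy : ContDiff ℝ 4 y)
    (hry : ContDiff ℝ 2 (fun x => r x * deriv (deriv y) x))
    (hsol : IsSol4 r p q y) :
    ∀ x ∈ Ioi a, HasDerivAt (T4 r q y) (p x * y x) x := by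
  have hyd : Differentiable ℝ y := hy.differentiable (by norm_num)
  have hy3 : ContDiff ℝ 3 (deriv y) :=
    ((contDiff_succ_iff_deriv (n := 3)).mp (by exact_mod_cast hy)).2.2
  have hyd' : Differentiable ℝ (deriv y) := hy3.differentiable (by norm_num)
  have hg : ContDiff ℝ 1 (deriv (fun s => r s * deriv (deriv y) s)) :=
    ((contDiff_succ_iff_deriv (n := 1)).mp (by exact_mod_cast hry)).2.2
  have hgd : Differentiable ℝ (deriv (fun s => r s * deriv (deriv y) s)) :=
    hg.differentiable (by norm_num)
  have hTc : Continuous (T4 r q y) := cont_T4 hqc hy hry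
  have key : ∀ t, a < t → y t ≠ 0 → DifferentiableAt ℝ (T4 r q y) t := by
    intro t ht hyt
    by_contra hd
    have h0 : p t * y t = 0 := by rw [← hsol t, deriv_zero_of_not_differentiableAt hd]
    exact hyt ((mul_eq_zero.mp h0).resolve_left (hppos t (le_of_lt ht)).ne')
  intro x₀ hx₀
  suffices hdiff : DifferentiableAt ℝ (T4 r q y) x₀ by
    have h := hdiff.hasDerivAt
    rwa [hsol x₀] at h
  by_cases hy0 : y x₀ = 0
  swap
  · exact key x₀ hx₀ hy0
  by_cases hacc : x₀ ∈ closure {x | x ≠ x₀ ∧ y x = 0}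
  · -- the zeros of `y` accumulate at `x₀`
    have h1 : deriv y x₀ = 0 := cluster_deriv_zero hyd hacc
    have h2 : deriv (deriv y) x₀ = 0 := cluster_deriv_zero hyd' (cluster_rolle hyd hacc)
    have hq' : HasDerivAt (fun x => q x * deriv y x) 0 x₀ := by
      rw [hasDerivAt_iff_tendsto_slope]
      have hslope : Tendsto (slope (deriv y) x₀) (𝓝[≠] x₀) (𝓝 0) := by
        have h := (hyd' x₀).hasDerivAt
        rw [h2] at h
        exact hasDerivAt_iff_tendsto_slope.mp h
      have hqt : Tendsto q (𝓝[≠] x₀) (𝓝 (q x₀)) :=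
        (hqc.tendsto x₀).mono_left nhdsWithin_le_nhds
      have hmul := hqt.mul hslope
      rw [mul_zero] at hmul
      refine hmul.congr (fun x => ?_)
      simp only [slope_def_field, h1, mul_zero, sub_zero]
      ring
    have hD : DifferentiableAt ℝ
        (fun x => deriv (fun s => r s * deriv (deriv y) s) x - q x * deriv y x) x₀ :=
      (hgd x₀).sub hq'.differentiableAt
    exact hD
  · -- `x₀` is an isolated zero of `y`
    rw [Metric.mem_closure_iff] at hacc
    push_neg at hacc
    obtain ⟨ε₁, hε₁, hball⟩ := hacc
    have hε : 0 < min ε₁ (x₀ - a) := lt_min hε₁ (by simpa using hx₀)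
    set ε := min ε₁ (x₀ - a) with hεdef
    have hnear : ∀ t, t ≠ x₀ → dist x₀ t < ε → a < t ∧ y t ≠ 0 := by
      intro t htne hdt
      constructor
      · rw [Real.dist_eq, abs_lt] at hdt
        have h3 : ε ≤ x₀ - a := min_le_right _ _
        linarith [hdt.1, hdt.2]
      · intro hyt
        exact absurd (hball t ⟨htne, hyt⟩) (not_le.mpr (lt_of_lt_of_le hdt (min_le_left _ _)))
    suffices h : HasDerivAt (T4 r q y) 0 x₀ from h.differentiableAt
    rw [hasDerivAt_iff_tendsto_slope, Metric.tendsto_nhdsWithin_nhds]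
    intro ε' hε'
    have hc0 : Tendsto (fun t => p t * y t) (𝓝 x₀) (𝓝 0) := by
      have := ((hpc.mul hyd.continuous).tendsto x₀)
      rwa [Pi.mul_apply, hy0, mul_zero] at this
    rw [Metric.tendsto_nhds] at hc0
    obtain ⟨δ₁, hδ₁, hδball⟩ := Metric.eventually_nhds_iff.mp (hc0 ε' hε')
    refine ⟨min δ₁ ε, lt_min hδ₁ hε, ?_⟩
    intro x hxne hxd
    have hxd₁ : dist x x₀ < δ₁ := lt_of_lt_of_le hxd (min_le_left _ _)
    have hxdε : dist x x₀ < ε := lt_of_lt_of_le hxd (min_le_right _ _)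
    have hxne' : x ≠ x₀ := hxne
    -- points strictly between x₀ and x are good
    have hgood : ∀ t, t ≠ x₀ → dist x₀ t < dist x₀ x → DifferentiableAt ℝ (T4 r q y) t := by
      intro t htne hdt
      have h5 : dist x₀ t < ε := lt_trans hdt (by rwa [dist_comm])
      have := hnear t htne h5
      exact key t this.1 this.2
    have hxsub : x - x₀ ≠ 0 := sub_ne_zero.mpr hxne'
    have hslope : ∃ ξ, dist x₀ ξ < dist x₀ x ∧
        slope (T4 r q y) x₀ x = deriv (T4 r q y) ξ := by
      rcases hxne'.lt_or_gt with hlt | hlt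
      · -- x < x₀
        obtain ⟨ξ, hξ, hs⟩ := exists_deriv_eq_slope (T4 r q y) hlt hTc.continuousOn
          (fun t ht => (hgood t ht.2.ne (by
            rw [Real.dist_eq, Real.dist_eq, abs_of_pos (by linarith [ht.2] : (0:ℝ) < x₀ - t),
              abs_of_pos (by linarith : (0:ℝ) < x₀ - x)]
            linarith [ht.1])).differentiableWithinAt)
        refine ⟨ξ, ?_, ?_⟩
        · rw [Real.dist_eq, Real.dist_eq, abs_of_pos (by linarith [hξ.2] : (0:ℝ) < x₀ - ξ),
            abs_of_pos (by linarith : (0:ℝ) < x₀ - x)]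
          linarith [hξ.1]
        · rw [slope_def_field, hs,
            div_eq_div_iff hxsub (sub_ne_zero.mpr (ne_of_gt (by linarith : x < x₀)))]
          ring
      · -- x₀ < x
        obtain ⟨ξ, hξ, hs⟩ := exists_deriv_eq_slope (T4 r q y) hlt hTc.continuousOn
          (fun t ht => (hgood t ht.1.ne' (by
            rw [Real.dist_eq, Real.dist_eq, abs_of_neg (by linarith [ht.1] : x₀ - t < 0),
              abs_of_neg (by linarith : x₀ - x < 0)]
            linarith [ht.2])).differentiableWithinAt)
        refine ⟨ξ, ?_, ?_⟩
        · rw [Real.dist_eq, Real.dist_eq, abs_of_neg (by linarith [hξ.1] : x₀ - ξ < 0),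
            abs_of_neg (by linarith : x₀ - x < 0)]
          linarith [hξ.2]
        · rw [slope_def_field, hs]
    obtain ⟨ξ, hξd, hs⟩ := hslope
    rw [hs, hsol ξ]
    have hξd₁ : dist ξ x₀ < δ₁ := by
      rw [dist_comm]
      exact lt_trans hξd (by rwa [dist_comm])
    have := hδball hξd₁
    simpa using this

set_option maxHeartbeats 1000000 in
/-- If both the first zero `μ̂₁(a) = b` and the second zero `μ̂₂(a) = c` of `τ̂'` in
`(a, ∞)` exist, then `μ̂₁(a)` is a simple zero, `μ̂₁(a) < μ̂₂(a)`, and `σ̂` vanishes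
somewhere in `(μ̂₁(a), μ̂₂(a)]`. -/
theorem sigma_vanishes_between_focal_points
    (a b c : ℝ) (r p q u v : ℝ → ℝ)
    (hrc : Continuous r) (hpc : Continuous p) (hqc : Continuous q)
    (hrpos : ∀ x ∈ Ici a, 0 < r x) (hppos : ∀ x ∈ Ici a, 0 < p x)
    (hu : ContDiff ℝ 4 u) (hv : ContDiff ℝ 4 v)
    (hru : ContDiff ℝ 2 (fun x => r x * deriv (deriv u) x))
    (hrv : ContDiff ℝ 2 (fun x => r x * deriv (deriv v) x))
    (husol : IsSol4 r p q u) (hvsol : IsSol4 r p q v)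
    (hic : FundIC r q a u v)
    (hb : a < b) (hbz : deriv (tauHat r q u v) b = 0)
    (hbmin : ∀ x ∈ Ioo a b, deriv (tauHat r q u v) x ≠ 0)
    (hc : a < c) (hcz : deriv (tauHat r q u v) c = 0) (hcb : c ≠ b)
    (hcmin : ∀ x ∈ Ioo a c, deriv (tauHat r q u v) x = 0 → x = b) :
    deriv (deriv (tauHat r q u v)) b ≠ 0 ∧ b < c ∧
    ∃ x ∈ Ioc b c, sigmaHat u v x = 0 := by
  obtain ⟨hua, hu1a, hTua, hu'a, hva, hv'a, hv1a, hTva⟩ := hic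
  -- basic differentiability
  have hud : Differentiable ℝ u := hu.differentiable (by norm_num)
  have hu3 : ContDiff ℝ 3 (deriv u) :=
    ((contDiff_succ_iff_deriv (n := 3)).mp (by exact_mod_cast hu)).2.2
  have hud' : Differentiable ℝ (deriv u) := hu3.differentiable (by norm_num)
  have hud'' : Differentiable ℝ (deriv (deriv u)) :=
    (((contDiff_succ_iff_deriv (n := 2)).mp (by exact_mod_cast hu3)).2.2).differentiable
      (by norm_num)
  have hvd : Differentiable ℝ v := hv.differentiable (by norm_num)
  have hv3 : ContDiff ℝ 3 (deriv v) :=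
    ((contDiff_succ_iff_deriv (n := 3)).mp (by exact_mod_cast hv)).2.2
  have hvd' : Differentiable ℝ (deriv v) := hv3.differentiable (by norm_num)
  have hvd'' : Differentiable ℝ (deriv (deriv v)) :=
    (((contDiff_succ_iff_deriv (n := 2)).mp (by exact_mod_cast hv3)).2.2).differentiable
      (by norm_num)
  have hTuc : Continuous (T4 r q u) := cont_T4 hqc hu hru
  have hTvc : Continuous (T4 r q v) := cont_T4 hqc hv hrv
  have hTu' : ∀ x ∈ Ioi a, HasDerivAt (T4 r q u) (p x * u x) x :=
    hasDerivAt_T4 hpc hqc hppos hu hru husol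
  have hTv' : ∀ x ∈ Ioi a, HasDerivAt (T4 r q v) (p x * v x) x :=
    hasDerivAt_T4 hpc hqc hppos hv hrv hvsol
  have hu1' : ∀ x, HasDerivAt (fun s => r s * deriv (deriv u) s)
      (T4 r q u x + q x * deriv u x) x := hasDerivAt_r_dd hru
  have hv1' : ∀ x, HasDerivAt (fun s => r s * deriv (deriv v) s)
      (T4 r q v x + q x * deriv v x) x := hasDerivAt_r_dd hrv
  -- continuity of the subwronskians
  have hτcont : Continuous (tauHat r q u v) := by
    have : Continuous fun x => u x * T4 r q v x - v x * T4 r q u x :=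
      (hud.continuous.mul hTvc).sub (hvd.continuous.mul hTuc)
    exact this
  have hσcont : Continuous (sigmaHat u v) := by
    have : Continuous fun x => u x * deriv v x - v x * deriv u x :=
      (hud.continuous.mul hvd'.continuous).sub (hvd.continuous.mul hud'.continuous)
    exact this
  have hW24cont : Continuous (w24Aux r q u v) := by
    have : Continuous fun x => deriv u x * T4 r q v x - deriv v x * T4 r q u x :=
      (hud'.continuous.mul hTvc).sub (hvd'.continuous.mul hTuc)
    exact this
  have hW23cont : Continuous (w23Aux r u v) := by
    have : Continuous fun x => deriv u x * (r x * deriv (deriv v) x)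
        - deriv v x * (r x * deriv (deriv u) x) :=
      (hud'.continuous.mul hrv.continuous).sub (hvd'.continuous.mul hru.continuous)
    exact this
  -- derivative formulas
  have hτ' : ∀ x ∈ Ioi a, HasDerivAt (tauHat r q u v) (w24Aux r q u v x) x := by
    intro x hx
    have h := ((hud x).hasDerivAt.mul (hTv' x hx)).sub ((hvd x).hasDerivAt.mul (hTu' x hx))
    have h2 : HasDerivAt (fun y => u y * T4 r q v y - v y * T4 r q u y)
        (w24Aux r q u v x) x := by
      refine h.congr_deriv ?_
      simp only [w24Aux]
      ring
    exact h2
  have hderivτ : ∀ x ∈ Ioi a, deriv (tauHat r q u v) x = w24Aux r q u v x :=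
    fun x hx => (hτ' x hx).deriv
  have hw24' : ∀ x ∈ Ioi a, HasDerivAt (w24Aux r q u v)
      (rhoHat r q u v x / r x - p x * sigmaHat u v x) x := by
    intro x hx
    have hrx : r x ≠ 0 := (hrpos x (Set.mem_Ici.mpr (le_of_lt hx))).ne'
    have h := ((hud' x).hasDerivAt.mul (hTv' x hx)).sub ((hvd' x).hasDerivAt.mul (hTu' x hx))
    have h2 : HasDerivAt (fun y => deriv u y * T4 r q v y - deriv v y * T4 r q u y)
        (rhoHat r q u v x / r x - p x * sigmaHat u v x) x := by
      refine h.congr_deriv ?_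
      simp only [rhoHat, sigmaHat]
      field_simp
      ring
    exact h2
  have hσ' : ∀ x, r x ≠ 0 → HasDerivAt (sigmaHat u v) (w13Aux r u v x / r x) x := by
    intro x hrx
    have h := ((hud x).hasDerivAt.mul (hvd' x).hasDerivAt).sub
      ((hvd x).hasDerivAt.mul (hud' x).hasDerivAt)
    have h2 : HasDerivAt (fun y => u y * deriv v y - v y * deriv u y)
        (w13Aux r u v x / r x) x := by
      refine h.congr_deriv ?_
      simp only [w13Aux]
      field_simp
      ring
    exact h2
  have hw23' : ∀ x, HasDerivAt (w23Aux r u v) (w24Aux r q u v x) x := by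
    intro x
    have h := ((hud' x).hasDerivAt.mul (hv1' x)).sub ((hvd' x).hasDerivAt.mul (hu1' x))
    have h2 : HasDerivAt (fun y => deriv u y * (r y * deriv (deriv v) y)
        - deriv v y * (r y * deriv (deriv u) y)) (w24Aux r q u v x) x := by
      refine h.congr_deriv ?_
      simp only [w24Aux]
      ring
    exact h2
  -- `w23 = τ̂` on `[a, ∞)`
  have hw23τ : ∀ x ∈ Ici a, w23Aux r u v x = tauHat r q u v x := by
    have hW23a : w23Aux r u v a = 0 := by
      simp only [w23Aux]
      rw [hu'a, hv'a, hv1a, hu1a]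
      ring
    have hτa : tauHat r q u v a = 0 := by
      simp only [tauHat]
      rw [hua, hva]
      ring
    have hcont : Continuous (fun x => w23Aux r u v x - tauHat r q u v x) :=
      hW23cont.sub hτcont
    have hd : ∀ t ∈ Ioi a, HasDerivAt (fun x => w23Aux r u v x - tauHat r q u v x) 0 t := by
      intro t ht
      have := (hw23' t).sub (hτ' t ht)
      rwa [sub_self] at this
    intro x hx
    rcases eq_or_lt_of_le (Set.mem_Ici.mp hx) with heq | hax
    · rw [← heq, hW23a, hτa]
    set h : ℝ → ℝ := fun x => w23Aux r u v x - tauHat r q u v x with hhdef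
    have hconst : ∀ z ∈ Ioo a x, h z = h x := by
      intro z hz
      have := constant_of_has_deriv_right_zero (f := h) (a := z) (b := x)
        hcont.continuousOn
        (fun t ht => (hd t (lt_of_lt_of_le hz.1 ht.1)).hasDerivWithinAt)
        x ⟨le_of_lt hz.2, le_refl x⟩
      exact this.symm
    have h1 : Tendsto h (𝓝[>] a) (𝓝 (h a)) := (hcont.tendsto a).mono_left nhdsWithin_le_nhds
    have h2 : Tendsto h (𝓝[>] a) (𝓝 (h x)) := by
      refine Tendsto.congr' ?_ tendsto_const_nhds
      filter_upwards [Ioo_mem_nhdsGT_of_mem ⟨le_refl a, hax⟩] with t ht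
      exact (hconst t ht).symm
    have h3 : h a = h x := tendsto_nhds_unique h1 h2
    have h4 : h a = 0 := by simp only [hhdef, hW23a, hτa, sub_zero]
    have h5 : h x = 0 := by rw [← h3, h4]
    simpa only [hhdef, sub_eq_zero] using h5
  -- Plücker identity
  have hpluck : ∀ x, w13Aux r u v x * w24Aux r q u v x
      = sigmaHat u v x * rhoHat r q u v x + tauHat r q u v x * w23Aux r u v x := by
    intro x
    simp only [w13Aux, w24Aux, w23Aux, sigmaHat, rhoHat, tauHat]
    ring
  -- b < c
  have hbc : b < c := by
    rcases hcb.lt_or_gt with h | h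
    · exact absurd hcz (hbmin c ⟨hc, h⟩)
    · exact h
  -- values of w24
  have hW24b : w24Aux r q u v b = 0 := by rw [← hderivτ b hb]; exact hbz
  have hW24c : w24Aux r q u v c = 0 := by rw [← hderivτ c hc]; exact hcz
  have hW24a : w24Aux r q u v a = 1 := by
    simp only [w24Aux]
    rw [hu'a, hv'a, hTua, hTva]
    ring
  -- positivity of w24 on [a, b)
  have hW24pos : ∀ x ∈ Ico a b, 0 < w24Aux r q u v x := by
    rintro x ⟨hax, hxb⟩
    rcases eq_or_lt_of_le hax with heq | hax
    · rw [← heq, hW24a]; norm_num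
    by_contra hle
    push_neg at hle
    have hne : w24Aux r q u v x ≠ 0 := by
      intro h0
      exact hbmin x ⟨hax, hxb⟩ (by rw [hderivτ x hax]; exact h0)
    have hxneg : w24Aux r q u v x < 0 := lt_of_le_of_ne hle hne
    obtain ⟨z, hz, hz0⟩ := intermediate_value_Ioo' (le_of_lt hax) hW24cont.continuousOn
      (show (0:ℝ) ∈ Ioo (w24Aux r q u v x) (w24Aux r q u v a) from
        ⟨hxneg, by rw [hW24a]; norm_num⟩)
    exact hbmin z ⟨hz.1, hz.2.trans hxb⟩ (by rw [hderivτ z hz.1]; exact hz0)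
  -- positivity of τ̂ on (a, b]
  have hτpos : ∀ x ∈ Ioc a b, 0 < tauHat r q u v x := by
    rintro x ⟨hax, hxb⟩
    obtain ⟨ξ, hξ, hslope⟩ := exists_hasDerivAt_eq_slope (tauHat r q u v) (w24Aux r q u v)
      hax hτcont.continuousOn (fun t ht => hτ' t ht.1)
    have hτa : tauHat r q u v a = 0 := by
      simp only [tauHat]; rw [hua, hva]; ring
    rw [hτa, sub_zero] at hslope
    have hξpos : 0 < w24Aux r q u v ξ :=
      hW24pos ξ ⟨le_of_lt hξ.1, lt_of_lt_of_le hξ.2 hxb⟩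
    have hx0 : tauHat r q u v x = w24Aux r q u v ξ * (x - a) := by
      rw [hslope]
      exact (div_mul_cancel₀ _ (sub_ne_zero.mpr hax.ne')).symm
    rw [hx0]
    exact mul_pos hξpos (sub_pos.mpr hax)
  -- a small interval to the right of `a` where `u' > 0`
  have hev : ∀ᶠ x in 𝓝 a, 0 < deriv u x := by
    have h1 : Tendsto (deriv u) (𝓝 a) (𝓝 1) := by
      have := (hud'.continuous.tendsto a)
      rwa [hu'a] at this
    exact h1.eventually (eventually_gt_nhds zero_lt_one)
  obtain ⟨δ₁, hδ₁, hδball⟩ := Metric.eventually_nhds_iff.mp hev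
  set δ := min (δ₁ / 2) ((b - a) / 2) with hδdef
  have hδpos : 0 < δ := lt_min (by linarith) (by linarith)
  have haδb : a + δ < b := by
    have : δ ≤ (b - a) / 2 := min_le_right _ _
    linarith
  have hu'pos : ∀ t ∈ Icc a (a + δ), 0 < deriv u t := by
    rintro t ⟨h1, h2⟩
    apply hδball
    rw [Real.dist_eq, abs_lt]
    have h3 : δ ≤ δ₁ / 2 := min_le_left _ _
    constructor <;> linarith
  -- σ̂ > 0 on (a, a+δ]
  have hσδ : ∀ x ∈ Ioc a (a + δ), 0 < sigmaHat u v x := by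
    rintro x ⟨hax, hxδ⟩
    have hux : 0 < u x := by
      obtain ⟨ξ, hξ, hs⟩ := exists_hasDerivAt_eq_slope u (deriv u) hax
        hud.continuous.continuousOn (fun t _ => (hud t).hasDerivAt)
      rw [hua, sub_zero] at hs
      have h1 : 0 < deriv u ξ := hu'pos ξ ⟨le_of_lt hξ.1, le_trans (le_of_lt hξ.2) hxδ⟩
      have h2 : u x = deriv u ξ * (x - a) := by
        rw [hs]
        exact (div_mul_cancel₀ _ (sub_ne_zero.mpr hax.ne')).symm
      rw [h2]
      exact mul_pos h1 (sub_pos.mpr hax)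
    have hψ : StrictMonoOn (fun t => deriv v t / deriv u t) (Icc a x) := by
      apply strictMonoOn_of_deriv_pos (convex_Icc a x)
      · exact ContinuousOn.div hvd'.continuous.continuousOn hud'.continuous.continuousOn
          (fun t ht => (hu'pos t ⟨ht.1, le_trans ht.2 hxδ⟩).ne')
      · intro t ht
        rw [interior_Icc] at ht
        have htmem : t ∈ Icc a (a + δ) := ⟨le_of_lt ht.1, le_trans (le_of_lt ht.2) hxδ⟩
        have hu't : deriv u t ≠ 0 := (hu'pos t htmem).ne'
        have hd : HasDerivAt (fun s => deriv v s / deriv u s)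
            ((deriv (deriv v) t * deriv u t - deriv v t * deriv (deriv u) t)
              / (deriv u t) ^ 2) t :=
          (hvd' t).hasDerivAt.div (hud' t).hasDerivAt hu't
        rw [hd.deriv]
        apply div_pos ?_ (pow_pos (hu'pos t htmem) 2)
        have hrt : 0 < r t := hrpos t (le_of_lt ht.1)
        have hW : deriv (deriv v) t * deriv u t - deriv v t * deriv (deriv u) t
            = w23Aux r u v t / r t := by
          simp only [w23Aux]
          field_simp
        rw [hW, hw23τ t (le_of_lt ht.1)]
        apply div_pos ?_ hrt
        exact hτpos t ⟨ht.1, le_of_lt (lt_of_lt_of_le ht.2 (le_trans hxδ (le_of_lt haδb)))⟩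
    obtain ⟨ξ, hξ, hcmvt⟩ := exists_ratio_hasDerivAt_eq_ratio_slope v (deriv v) hax
      hvd.continuous.continuousOn (fun t _ => (hvd t).hasDerivAt)
      u (deriv u) hud.continuous.continuousOn (fun t _ => (hud t).hasDerivAt)
    rw [hua, hva, sub_zero, sub_zero] at hcmvt
    -- hcmvt : u x * deriv v ξ = v x * deriv u ξ
    have hξmem : ξ ∈ Icc a x := ⟨le_of_lt hξ.1, le_of_lt hξ.2⟩
    have hxmem : x ∈ Icc a x := ⟨le_of_lt hax, le_refl x⟩
    have hmono := hψ hξmem hxmem hξ.2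
    have hu'ξ : 0 < deriv u ξ := hu'pos ξ ⟨le_of_lt hξ.1, le_trans (le_of_lt hξ.2) hxδ⟩
    have hu'x : 0 < deriv u x := hu'pos x ⟨le_of_lt hax, hxδ⟩
    rw [div_lt_div_iff₀ hu'ξ hu'x] at hmono
    have hkey : sigmaHat u v x * deriv u ξ
        = u x * (deriv v x * deriv u ξ - deriv v ξ * deriv u x) := by
      simp only [sigmaHat]
      linear_combination (deriv u x) * hcmvt
    have hpos : 0 < sigmaHat u v x * deriv u ξ := by
      rw [hkey]
      exact mul_pos hux (by linarith)
    nlinarith [hu'ξ, hpos]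
  -- σ̂ > 0 on all of (a, b]
  have hσaδ : 0 < sigmaHat u v (a + δ) := hσδ (a + δ) ⟨by linarith, le_refl _⟩
  have hσpos : ∀ x ∈ Ioc a b, 0 < sigmaHat u v x := by
    by_contra hcon
    push_neg at hcon
    obtain ⟨x₀, hx₀mem, hx₀⟩ := hcon
    have hx₀δ : a + δ < x₀ := by
      by_contra hle
      push_neg at hle
      exact absurd (hσδ x₀ ⟨hx₀mem.1, hle⟩) (not_lt.mpr hx₀)
    set T : Set ℝ := Icc (a + δ) b ∩ sigmaHat u v ⁻¹' {0} with hTdef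
    have hTbdd : BddBelow T := ⟨a + δ, fun t ht => ht.1.1⟩
    have hTne : T.Nonempty := by
      rcases eq_or_lt_of_le hx₀ with h0 | hneg
      · exact ⟨x₀, ⟨le_of_lt hx₀δ, hx₀mem.2⟩, h0⟩
      · obtain ⟨z, hz, hz0⟩ := intermediate_value_Ioo' (le_of_lt hx₀δ) hσcont.continuousOn
          (show (0:ℝ) ∈ Ioo (sigmaHat u v x₀) (sigmaHat u v (a + δ)) from ⟨hneg, hσaδ⟩)
        exact ⟨z, ⟨le_of_lt hz.1, le_of_lt (lt_of_lt_of_le hz.2 hx₀mem.2)⟩, hz0⟩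
    have hTclosed : IsClosed T := isClosed_Icc.inter (isClosed_singleton.preimage hσcont)
    set x₁ := sInf T with hx₁def
    have hx₁T : x₁ ∈ T := hTclosed.csInf_mem hTne hTbdd
    have hx₁Icc : x₁ ∈ Icc (a + δ) b := hx₁T.1
    have hx₁0 : sigmaHat u v x₁ = 0 := hx₁T.2
    have hx₁gt : a + δ < x₁ := by
      rcases eq_or_lt_of_le hx₁Icc.1 with h0 | h
      · exact absurd hx₁0 (by rw [← h0]; exact hσaδ.ne')
      · exact h
    have hax₁ : a < x₁ := by linarith
    have hσmid : ∀ t ∈ Ico (a + δ) x₁, 0 < sigmaHat u v t := by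
      rintro t ⟨h1, h2⟩
      by_contra hle
      push_neg at hle
      rcases eq_or_lt_of_le hle with h0 | hneg
      · have : t ∈ T := ⟨⟨h1, le_of_lt (lt_of_lt_of_le h2 hx₁Icc.2)⟩, h0⟩
        exact absurd (csInf_le hTbdd this) (not_le.mpr h2)
      · rcases eq_or_lt_of_le h1 with h0' | h1'
        · exact absurd hσaδ (by rw [h0']; exact not_lt.mpr hle)
        · obtain ⟨z, hz, hz0⟩ := intermediate_value_Ioo' (le_of_lt h1') hσcont.continuousOn
            (show (0:ℝ) ∈ Ioo (sigmaHat u v t) (sigmaHat u v (a + δ)) from ⟨hneg, hσaδ⟩)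
          have hzT : z ∈ T :=
            ⟨⟨le_of_lt hz.1, le_of_lt (lt_of_lt_of_le (hz.2.trans h2) hx₁Icc.2)⟩, hz0⟩
          exact absurd (csInf_le hTbdd hzT) (not_le.mpr (hz.2.trans h2))
    have hσleft : ∀ t ∈ Ioo a x₁, 0 < sigmaHat u v t := by
      rintro t ⟨h1, h2⟩
      rcases le_or_gt t (a + δ) with h | h
      · exact hσδ t ⟨h1, h⟩
      · exact hσmid t ⟨le_of_lt h, h2⟩
    -- the left derivative of σ̂ at x₁ is ≤ 0
    have hrx₁ : 0 < r x₁ := hrpos x₁ (le_of_lt hax₁)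
    have hsd := hσ' x₁ hrx₁.ne'
    have hW13le : w13Aux r u v x₁ / r x₁ ≤ 0 := by
      have hslope : Tendsto (slope (sigmaHat u v) x₁) (𝓝[<] x₁) (𝓝 (w13Aux r u v x₁ / r x₁)) :=
        (hasDerivAt_iff_tendsto_slope.mp hsd).mono_left
          (nhdsWithin_mono _ (fun t ht => ne_of_lt ht))
      refine le_of_tendsto hslope ?_
      filter_upwards [Ioo_mem_nhdsLT_of_mem ⟨hx₁gt, le_refl x₁⟩] with t ht
      have h1 : 0 < sigmaHat u v t := hσmid t ⟨le_of_lt ht.1, ht.2⟩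
      rw [slope_def_field, hx₁0, sub_zero]
      exact div_nonpos_of_nonneg_of_nonpos (le_of_lt h1) (by linarith [ht.2])
    have hW13 : w13Aux r u v x₁ ≤ 0 := by
      by_contra hgt
      push_neg at hgt
      exact absurd (div_pos hgt hrx₁) (not_lt.mpr hW13le)
    have hW24x₁ : 0 ≤ w24Aux r q u v x₁ := by
      rcases eq_or_lt_of_le hx₁Icc.2 with h0 | hlt
      · rw [h0, hW24b]
      · exact le_of_lt (hW24pos x₁ ⟨le_of_lt hax₁, hlt⟩)
    have hplx := hpluck x₁
    rw [hx₁0, hw23τ x₁ (le_of_lt hax₁)] at hplx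
    have hτx₁ : 0 < tauHat r q u v x₁ := hτpos x₁ ⟨hax₁, hx₁Icc.2⟩
    nlinarith [mul_nonpos_of_nonpos_of_nonneg hW13 hW24x₁, mul_pos hτx₁ hτx₁]
  -- signs at b
  have hσb : 0 < sigmaHat u v b := hσpos b ⟨hb, le_refl b⟩
  have hτb : 0 < tauHat r q u v b := hτpos b ⟨hb, le_refl b⟩
  have hplb := hpluck b
  rw [hW24b, mul_zero, hw23τ b (le_of_lt hb)] at hplb
  have hρb : rhoHat r q u v b < 0 := by nlinarith [mul_pos hτb hτb]
  have hrb : 0 < r b := hrpos b (le_of_lt hb)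
  have hpb : 0 < p b := hppos b (le_of_lt hb)
  -- the second derivative of τ̂ at b
  have hddτ : deriv (deriv (tauHat r q u v)) b
      = rhoHat r q u v b / r b - p b * sigmaHat u v b := by
    have hevd : deriv (tauHat r q u v) =ᶠ[𝓝 b] w24Aux r q u v := by
      filter_upwards [IsOpen.mem_nhds isOpen_Ioi hb] with t ht
      exact hderivτ t ht
    rw [hevd.deriv_eq]
    exact (hw24' b hb).deriv
  have hddτneg : deriv (deriv (tauHat r q u v)) b < 0 := by
    rw [hddτ]
    have h1 : rhoHat r q u v b / r b < 0 := div_neg_of_neg_of_pos hρb hrb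
    linarith [mul_pos hpb hσb]
  refine ⟨ne_of_lt hddτneg, hbc, ?_⟩
  -- final part : σ̂ must vanish in (b, c]
  by_contra hcon
  push_neg at hcon
  have hσne : ∀ x ∈ Icc b c, sigmaHat u v x ≠ 0 := by
    rintro x ⟨hbx, hxc⟩
    rcases eq_or_lt_of_le hbx with h0 | h
    · rw [← h0]; exact hσb.ne'
    · exact hcon x ⟨h, hxc⟩
  set G : ℝ → ℝ := fun x => w24Aux r q u v x / sigmaHat u v x with hGdef
  have hGcont : ContinuousOn G (Icc b c) :=
    ContinuousOn.div hW24cont.continuousOn hσcont.continuousOn hσne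
  have hGanti : StrictAntiOn G (Icc b c) := by
    apply strictAntiOn_of_deriv_neg (convex_Icc b c) hGcont
    intro x hx
    rw [interior_Icc] at hx
    have hax : a < x := lt_trans hb hx.1
    have hrx : 0 < r x := hrpos x (le_of_lt hax)
    have hpx : 0 < p x := hppos x (le_of_lt hax)
    have hσx : sigmaHat u v x ≠ 0 := hσne x ⟨le_of_lt hx.1, le_of_lt hx.2⟩
    have hd : HasDerivAt G
        (((rhoHat r q u v x / r x - p x * sigmaHat u v x) * sigmaHat u v x
          - w24Aux r q u v x * (w13Aux r u v x / r x)) / (sigmaHat u v x) ^ 2) x :=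
      (hw24' x hax).div (hσ' x hrx.ne') hσx
    rw [hd.deriv]
    have hσsq : 0 < sigmaHat u v x ^ 2 :=
      lt_of_le_of_ne (sq_nonneg _) (Ne.symm (pow_ne_zero 2 hσx))
    apply div_neg_of_neg_of_pos ?_ hσsq
    have hplx := hpluck x
    rw [hw23τ x (le_of_lt hax)] at hplx
    have hnum : (rhoHat r q u v x / r x - p x * sigmaHat u v x) * sigmaHat u v x
        - w24Aux r q u v x * (w13Aux r u v x / r x)
        = (-(tauHat r q u v x) ^ 2) / r x - p x * (sigmaHat u v x) ^ 2 := by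
      field_simp
      linear_combination (-1 : ℝ) * hplx
    rw [hnum]
    have h1 : (-(tauHat r q u v x) ^ 2) / r x ≤ 0 :=
      div_nonpos_of_nonpos_of_nonneg (by nlinarith [sq_nonneg (tauHat r q u v x)])
        (le_of_lt hrx)
    have h2 : 0 < p x * (sigmaHat u v x) ^ 2 := mul_pos hpx hσsq
    linarith
  have hGcb := hGanti ⟨le_refl b, le_of_lt hbc⟩ ⟨le_of_lt hbc, le_refl c⟩ hbc
  have hGb : G b = 0 := by simp only [hGdef, hW24b, zero_div]
  have hGc : G c = 0 := by simp only [hGdef, hW24c, zero_div]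
  rw [hGb, hGc] at hGcb
  exact lt_irrefl 0 hGcb
end

section
/- If μ̂₁(a) exists, then the eigenfunction y = u - (u'(μ̂₁)/v'(μ̂₁)) v of the systems-focal boundary problem satisfies y'(μ̂₁) = 0, Ty(μ̂₁) = 0, y(a) = 0, (r y'')(a) = 0, and moreover y > 0, y' > 0, and Ty < 0 on (a, μ̂₁). -/
open Set Filter MeasureTheory intervalIntegral

private lemma derivStep4 {f : ℝ → ℝ} {n : ℕ}
    (h : ContDiff ℝ ((n + 1 : ℕ) : WithTop ℕ∞) f) :
    Differentiable ℝ f ∧ ContDiff ℝ ((n : ℕ) : WithTop ℕ∞) (deriv f) := by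
  have h' : ContDiff ℝ (((n : ℕ) : WithTop ℕ∞) + 1) f := by exact_mod_cast h
  have := contDiff_succ_iff_deriv.mp h'
  exact ⟨this.1, this.2.2⟩

/-- The eigenfunction `y = u - (u'(μ̂₁)/v'(μ̂₁)) v` realizing the first systems-focal
point `μ̂₁(a) = b` satisfies `y'(μ̂₁) = Ty(μ̂₁) = 0`, `y(a) = (r y'')(a) = 0`, and
`y > 0`, `y' > 0`, `Ty < 0` on `(a, μ̂₁)`. -/
theorem focal_eigenfunction_properties
    (a b : ℝ) (r p q u v : ℝ → ℝ)
    (hrc : Continuous r) (hpc : Continuous p) (hqc : Continuous q)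
    (hrpos : ∀ x ∈ Ici a, 0 < r x) (hppos : ∀ x ∈ Ici a, 0 < p x)
    (hu : ContDiff ℝ 4 u) (hv : ContDiff ℝ 4 v)
    (hru : ContDiff ℝ 2 (fun x => r x * deriv (deriv u) x))
    (hrv : ContDiff ℝ 2 (fun x => r x * deriv (deriv v) x))
    (husol : IsSol4 r p q u) (hvsol : IsSol4 r p q v)
    (hic : FundIC r q a u v)
    (hb : a < b) (hbz : deriv (tauHat r q u v) b = 0)
    (hbmin : ∀ x ∈ Ioo a b, deriv (tauHat r q u v) x ≠ 0)
    (hupos : ∀ x ∈ Ioc a b, 0 < u x ∧ 0 < deriv u x ∧ 0 < T4 r q u x)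
    (hvpos : ∀ x ∈ Ioc a b, 0 < v x ∧ 0 < deriv v x ∧ 0 < T4 r q v x)
    (htau : ∀ x ∈ Ioc a b, 0 < tauHat r q u v x) :
    ∀ y : ℝ → ℝ, (∀ x, y x = u x - (deriv u b / deriv v b) * v x) →
      deriv y b = 0 ∧ T4 r q y b = 0 ∧ y a = 0 ∧ r a * deriv (deriv y) a = 0 ∧
      ∀ x ∈ Ioo a b, 0 < y x ∧ 0 < deriv y x ∧ T4 r q y x < 0 := by
  obtain ⟨hua, hua2, hTua, hua1, hva, hva1, hva2, hTva⟩ := hic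
  -- basic smoothness facts
  have hu4 : ContDiff ℝ ((3 + 1 : ℕ) : WithTop ℕ∞) u := by exact_mod_cast hu
  have hv4 : ContDiff ℝ ((3 + 1 : ℕ) : WithTop ℕ∞) v := by exact_mod_cast hv
  obtain ⟨hud, hu3⟩ := derivStep4 hu4
  obtain ⟨hvd, hv3⟩ := derivStep4 hv4
  have hu3' : ContDiff ℝ ((2 + 1 : ℕ) : WithTop ℕ∞) (deriv u) := by exact_mod_cast hu3
  have hv3' : ContDiff ℝ ((2 + 1 : ℕ) : WithTop ℕ∞) (deriv v) := by exact_mod_cast hv3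
  obtain ⟨hu'd, hu2⟩ := derivStep4 hu3'
  obtain ⟨hv'd, hv2⟩ := derivStep4 hv3'
  have hu'c : Continuous (deriv u) := hu3.continuous
  have hv'c : Continuous (deriv v) := hv3.continuous
  have hrud : Differentiable ℝ (fun x => r x * deriv (deriv u) x) :=
    hru.differentiable two_ne_zero
  have hrvd : Differentiable ℝ (fun x => r x * deriv (deriv v) x) :=
    hrv.differentiable two_ne_zero
  have hTuc : Continuous (T4 r q u) := by
    have h1 : Continuous (deriv (fun x => r x * deriv (deriv u) x)) :=
      hru.continuous_deriv one_le_two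
    exact h1.sub (hqc.mul hu'c)
  have hTvc : Continuous (T4 r q v) := by
    have h1 : Continuous (deriv (fun x => r x * deriv (deriv v) x)) :=
      hrv.continuous_deriv one_le_two
    exact h1.sub (hqc.mul hv'c)
  have hb' : b ∈ Ioc a b := ⟨hb, le_refl b⟩
  -- T4 derivatives on (a, b]
  have hTud : ∀ x ∈ Ioc a b, HasDerivAt (T4 r q u) (p x * u x) x := by
    intro x hx
    have hne : deriv (T4 r q u) x ≠ 0 := by
      rw [husol x]
      exact (mul_pos (hppos x hx.1.le) (hupos x hx).1).ne'
    have h2 := (differentiableAt_of_deriv_ne_zero hne).hasDerivAt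
    rwa [husol x] at h2
  have hTvd : ∀ x ∈ Ioc a b, HasDerivAt (T4 r q v) (p x * v x) x := by
    intro x hx
    have hne : deriv (T4 r q v) x ≠ 0 := by
      rw [hvsol x]
      exact (mul_pos (hppos x hx.1.le) (hvpos x hx).1).ne'
    have h2 := (differentiableAt_of_deriv_ne_zero hne).hasDerivAt
    rwa [hvsol x] at h2
  -- derivative of tauHat on (a, b]
  have htauD : ∀ x ∈ Ioc a b,
      HasDerivAt (tauHat r q u v)
        (deriv u x * T4 r q v x - deriv v x * T4 r q u x) x := by
    intro x hx
    have h1 := ((hud x).hasDerivAt.mul (hTvd x hx)).sub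
      ((hvd x).hasDerivAt.mul (hTud x hx))
    have h2 : HasDerivAt (tauHat r q u v)
        (deriv u x * T4 r q v x + u x * (p x * v x)
          - (deriv v x * T4 r q u x + v x * (p x * u x))) x := h1
    convert h2 using 1
    ring
  have hv'b : 0 < deriv v b := (hvpos b hb').2.1
  have hbkey : deriv u b * T4 r q v b = deriv v b * T4 r q u b := by
    have h1 := (htauD b hb').deriv
    rw [hbz] at h1
    linarith
  -- the rho-type identity : (r u'') v' - (r v'') u' = - tauHat on [a, b]
  have key : ∀ x ∈ Icc a b,
      (r x * deriv (deriv u) x) * deriv v x - (r x * deriv (deriv v) x) * deriv u x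
        = - tauHat r q u v x := by
    have hFD : ∀ x ∈ Ioo a b, HasDerivAt (fun s =>
        (r s * deriv (deriv u) s) * deriv v s - (r s * deriv (deriv v) s) * deriv u s
          + tauHat r q u v s) 0 x := by
      intro x hx
      have hx' : x ∈ Ioc a b := ⟨hx.1, hx.2.le⟩
      have e1 : deriv (fun s => r s * deriv (deriv u) s) x
          = T4 r q u x + q x * deriv u x := by simp only [T4]; ring
      have e2 : deriv (fun s => r s * deriv (deriv v) s) x
          = T4 r q v x + q x * deriv v x := by simp only [T4]; ring
      have h1 := (hrud x).hasDerivAt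
      rw [e1] at h1
      have h2 := (hrvd x).hasDerivAt
      rw [e2] at h2
      have h3 : HasDerivAt (deriv v) (deriv (deriv v) x) x := (hv'd x).hasDerivAt
      have h4 : HasDerivAt (deriv u) (deriv (deriv u) x) x := (hu'd x).hasDerivAt
      have hF := ((h1.fun_mul h3).fun_sub (h2.fun_mul h4)).fun_add (htauD x hx')
      refine hF.congr_deriv ?_
      ring
    have hFc : Continuous (fun s =>
        (r s * deriv (deriv u) s) * deriv v s - (r s * deriv (deriv v) s) * deriv u s
          + tauHat r q u v s) := by
      have htc : Continuous (tauHat r q u v) := by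
        unfold tauHat
        exact (hu.continuous.mul hTvc).sub (hv.continuous.mul hTuc)
      exact ((hru.continuous.mul hv'c).sub (hrv.continuous.mul hu'c)).add htc
    have hdiff : DifferentiableOn ℝ (fun s =>
        (r s * deriv (deriv u) s) * deriv v s - (r s * deriv (deriv v) s) * deriv u s
          + tauHat r q u v s) (interior (Icc a b)) := by
      rw [interior_Icc]
      exact fun x hx => ((hFD x hx).differentiableAt).differentiableWithinAt
    have hmono := monotoneOn_of_deriv_nonneg (convex_Icc a b) hFc.continuousOn hdiff
      (fun x hx => by rw [interior_Icc] at hx; exact ((hFD x hx).deriv).ge)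
    have hanti := antitoneOn_of_deriv_nonpos (convex_Icc a b) hFc.continuousOn hdiff
      (fun x hx => by rw [interior_Icc] at hx; exact ((hFD x hx).deriv).le)
    have hFa : (r a * deriv (deriv u) a) * deriv v a - (r a * deriv (deriv v) a) * deriv u a
        + tauHat r q u v a = 0 := by
      simp [tauHat, hua, hva, hua2, hva2]
    intro x hx
    have haI : a ∈ Icc a b := ⟨le_refl a, hb.le⟩
    have h1 := hmono haI hx hx.1
    have h2 := hanti haI hx hx.1
    have h3 : (r x * deriv (deriv u) x) * deriv v x - (r x * deriv (deriv v) x) * deriv u x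
        + tauHat r q u v x = 0 := le_antisymm (hFa ▸ h2) (hFa ▸ h1)
    linarith
  -- second Wronskian-type quantity negative on (a, b]
  have hW : ∀ x ∈ Ioc a b,
      deriv (deriv u) x * deriv v x - deriv u x * deriv (deriv v) x < 0 := by
    intro x hx
    have h1 := key x ⟨hx.1.le, hx.2⟩
    have h2 : 0 < tauHat r q u v x := htau x hx
    have hr : 0 < r x := hrpos x hx.1.le
    have h3 : r x * (deriv (deriv u) x * deriv v x - deriv u x * deriv (deriv v) x) < 0 := by
      nlinarith
    nlinarith
  -- quotient derivative
  have hδ : ∀ x ∈ Ioc a b, HasDerivAt (fun s => deriv u s / deriv v s)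
      ((deriv (deriv u) x * deriv v x - deriv u x * deriv (deriv v) x) / deriv v x ^ 2) x :=
    fun x hx => (hu'd x).hasDerivAt.div (hv'd x).hasDerivAt (hvpos x hx).2.1.ne'
  have hquot : ∀ x ∈ Ioo a b, deriv u b / deriv v b < deriv u x / deriv v x := by
    intro x hx
    have hxa : a < x := hx.1
    have hsub : Icc x b ⊆ Ioc a b := fun s hs => ⟨hxa.trans_le hs.1, hs.2⟩
    have hanti : StrictAntiOn (fun s => deriv u s / deriv v s) (Icc x b) := by
      apply strictAntiOn_of_deriv_neg (convex_Icc x b)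
      · exact (hu'c.continuousOn.div hv'c.continuousOn
          (fun s hs => (hvpos s (hsub hs)).2.1.ne'))
      · intro s hs
        rw [interior_Icc] at hs
        have hs' : s ∈ Ioc a b := ⟨hxa.trans hs.1, hs.2.le⟩
        rw [(hδ s hs').deriv]
        exact div_neg_of_neg_of_pos (hW s hs') (pow_pos (hvpos s hs').2.1 2)
    exact hanti ⟨le_refl x, hx.2.le⟩ ⟨hx.2.le, le_refl b⟩ hx.2
  -- now the eigenfunction
  intro y hy
  have hyf : y = fun x => u x - deriv u b / deriv v b * v x := funext hy
  subst hyf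
  set c : ℝ := deriv u b / deriv v b with hc
  have hy' : ∀ x, deriv (fun s => u s - c * v s) x = deriv u x - c * deriv v x := by
    intro x
    rw [deriv_fun_sub (hud x) ((hvd x).const_mul c), deriv_const_mul c (hvd x)]
  have hy'f : deriv (fun s => u s - c * v s) = fun x => deriv u x - c * deriv v x :=
    funext hy'
  have hy'' : ∀ x, deriv (deriv (fun s => u s - c * v s)) x
      = deriv (deriv u) x - c * deriv (deriv v) x := by
    intro x
    rw [hy'f, deriv_fun_sub (hu'd x) ((hv'd x).const_mul c), deriv_const_mul c (hv'd x)]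
  have hTy : ∀ x, T4 r q (fun s => u s - c * v s) x = T4 r q u x - c * T4 r q v x := by
    intro x
    have e : (fun s => r s * deriv (deriv (fun t => u t - c * v t)) s)
        = fun s => (r s * deriv (deriv u) s) - c * (r s * deriv (deriv v) s) := by
      funext s; rw [hy'' s]; ring
    simp only [T4, e]
    rw [deriv_fun_sub (hrud x) ((hrvd x).const_mul c), deriv_const_mul c (hrvd x), hy' x]
    ring
  -- y' > 0 on Ioo a b
  have hy'pos : ∀ x ∈ Ioo a b, 0 < deriv (fun s => u s - c * v s) x := by
    intro x hx
    rw [hy' x]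
    have h1 : c < deriv u x / deriv v x := hquot x hx
    have h2 : 0 < deriv v x := (hvpos x ⟨hx.1, hx.2.le⟩).2.1
    have := (lt_div_iff₀ h2).mp h1
    linarith
  -- y > 0 on Ioo a b
  have hypos : ∀ x ∈ Ioo a b, 0 < u x - c * v x := by
    have hmono : StrictMonoOn (fun s => u s - c * v s) (Icc a b) := by
      apply strictMonoOn_of_deriv_pos (convex_Icc a b)
      · exact (hu.continuous.sub (continuous_const.mul hv.continuous)).continuousOn
      · intro x hx; rw [interior_Icc] at hx; exact hy'pos x hx
    intro x hx
    have h1 := hmono ⟨le_refl a, hb.le⟩ ⟨hx.1.le, hx.2.le⟩ hx.1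
    simpa [hua, hva] using h1
  have hTyb : T4 r q u b - c * T4 r q v b = 0 := by
    rw [hc]
    field_simp
    linarith
  refine ⟨?_, ?_, ?_, ?_, ?_⟩
  · rw [hy' b, hc]
    field_simp
    ring
  · rw [hTy b]; exact hTyb
  · simp [hua, hva]
  · rw [hy'' a]
    have e : r a * (deriv (deriv u) a - c * deriv (deriv v) a)
        = r a * deriv (deriv u) a - c * (r a * deriv (deriv v) a) := by ring
    rw [e, hua2, hva2]; ring
  · intro x hx
    refine ⟨hypos x hx, hy'pos x hx, ?_⟩
    rw [hTy x]
    have hsub : Icc x b ⊆ Ioc a b := fun s hs => ⟨hx.1.trans_le hs.1, hs.2⟩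
    have hgmono : StrictMonoOn (fun s => T4 r q u s - c * T4 r q v s) (Icc x b) := by
      apply strictMonoOn_of_deriv_pos (convex_Icc x b)
      · exact (hTuc.sub (continuous_const.mul hTvc)).continuousOn
      · intro s hs
        rw [interior_Icc] at hs
        have hs' : s ∈ Ioc a b := ⟨hx.1.trans hs.1, hs.2.le⟩
        have hD := (hTud s hs').fun_sub ((hTvd s hs').const_mul c)
        rw [hD.deriv]
        have hys : 0 < u s - c * v s := hypos s ⟨hx.1.trans hs.1, hs.2⟩
        have hps : 0 < p s := hppos s hs'.1.le
        nlinarith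
    have h1 := hgmono ⟨le_refl x, hx.2.le⟩ ⟨hx.2.le, le_refl b⟩ hx.2
    simp only at h1
    linarith
end

section
/- Riccati-type existence argument: suppose the subwronskian σ̂ > 0 on (a,∞) and the function k = τ̂'/σ̂ satisfies k' = -p - k²/r with ∫ₐ^∞ p = +∞ and r > 0. Then k(x) → -∞ as x → +∞; in particular τ̂' has a zero in (a,∞), so the first systems-focal point μ̂₁(a) exists. -/
open Set Filter MeasureTheory intervalIntegral

/-- Riccati-type existence argument: if `σ̂ > 0` on `(a, ∞)` and `k = τ̂'/σ̂` satisfies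
`k' = -p - k²/r`, with `∫ₐ^∞ p = +∞`, then `k(x) → -∞` as `x → +∞`; in particular
`τ̂'` has a zero in `(a, ∞)`, i.e. the first systems-focal point `μ̂₁(a)` exists. -/
theorem riccati_focal_existence
    (a : ℝ) (r p q u v : ℝ → ℝ)
    (hrc : Continuous r) (hpc : Continuous p) (hqc : Continuous q)
    (hrpos : ∀ x ∈ Ici a, 0 < r x) (hppos : ∀ x ∈ Ici a, 0 < p x)
    (hu : ContDiff ℝ 4 u) (hv : ContDiff ℝ 4 v)
    (hru : ContDiff ℝ 2 (fun x => r x * deriv (deriv u) x))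
    (hrv : ContDiff ℝ 2 (fun x => r x * deriv (deriv v) x))
    (husol : IsSol4 r p q u) (hvsol : IsSol4 r p q v)
    (hic : FundIC r q a u v)
    (hσ : ∀ x > a, 0 < sigmaHat u v x)
    (hk : ∀ x > a,
      HasDerivAt (fun s => deriv (tauHat r q u v) s / sigmaHat u v s)
        (-p x - (deriv (tauHat r q u v) x / sigmaHat u v x) ^ 2 / r x) x)
    (hpint : Tendsto (fun b => ∫ x in a..b, p x) atTop atTop) :
    Tendsto (fun x => deriv (tauHat r q u v) x / sigmaHat u v x) atTop atBot ∧
    ∃ x > a, deriv (tauHat r q u v) x = 0 := by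
  obtain ⟨hua, hu1a, hTua, hu'a, hva, hv'a, hv1a, hTva⟩ := hic
  set τ' : ℝ → ℝ := deriv (tauHat r q u v) with hτ'def
  set σ : ℝ → ℝ := sigmaHat u v with hσdef
  set k : ℝ → ℝ := fun x => τ' x / σ x with hkdef
  have hkcont : ∀ x > a, ContinuousAt k x := fun x hx => (hk x hx).differentiableAt.continuousAt
  -- Part A : k → -∞
  have hA : Tendsto k atTop atBot := by
    have key : ∀ b ≥ a + 1, k b ≤ k (a + 1) - ∫ x in (a+1)..b, p x := by
      intro b hb
      have hsub : uIcc (a+1) b ⊆ Ioi a := by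
        rw [uIcc_of_le hb]
        intro x hx
        exact lt_of_lt_of_le (by linarith) hx.1
      have hderiv : ∀ x ∈ uIcc (a+1) b, HasDerivAt k (-p x - (k x) ^ 2 / r x) x :=
        fun x hx => hk x (hsub hx)
      have hcontk : ContinuousOn k (uIcc (a+1) b) := fun x hx =>
        (hkcont x (hsub hx)).continuousWithinAt
      have hcontr : ContinuousOn (fun x => -p x - (k x) ^ 2 / r x) (uIcc (a+1) b) := by
        apply ContinuousOn.sub hpc.neg.continuousOn
        apply ContinuousOn.div (hcontk.pow 2) hrc.continuousOn
        intro x hx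
        exact (hrpos x (mem_Ici.2 (le_of_lt (hsub hx)))).ne'
      have hint : IntervalIntegrable (fun x => -p x - (k x) ^ 2 / r x) volume (a+1) b :=
        hcontr.intervalIntegrable
      have heq := integral_eq_sub_of_hasDerivAt hderiv hint
      have hmono : (∫ x in (a+1)..b, (-p x - (k x) ^ 2 / r x)) ≤ ∫ x in (a+1)..b, -p x := by
        apply integral_mono_on hb hint (hpc.neg.intervalIntegrable _ _)
        intro x hx
        have hx' : a < x := hsub (by rw [uIcc_of_le hb]; exact hx)
        have h1 : 0 ≤ (k x) ^ 2 / r x := div_nonneg (sq_nonneg _) (hrpos x hx'.le).le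
        simp only [Pi.neg_apply]
        linarith
      rw [heq] at hmono
      rw [intervalIntegral.integral_neg] at hmono
      linarith
    have hX : Tendsto (fun b => (∫ x in a..b, p x) + -(∫ x in a..(a+1), p x)) atTop atTop :=
      tendsto_atTop_add_const_right atTop _ hpint
    have hX' : Tendsto (fun b => ∫ x in (a+1)..b, p x) atTop atTop := by
      refine hX.congr fun b => ?_
      rw [← sub_eq_add_neg]
      exact integral_interval_sub_left (hpc.intervalIntegrable a b)
        (hpc.intervalIntegrable a (a+1))
    have hlim : Tendsto (fun b => k (a+1) - ∫ x in (a+1)..b, p x) atTop atBot := by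
      have h1 : Tendsto (fun b => -∫ x in (a+1)..b, p x) atTop atBot :=
        tendsto_neg_atTop_atBot.comp hX'
      have h2 := tendsto_atBot_add_const_left atTop (k (a+1)) h1
      refine h2.congr fun b => ?_
      ring
    apply tendsto_atBot_mono' atTop _ hlim
    filter_upwards [eventually_ge_atTop (a+1)] with b hb using key b hb
  refine ⟨hA, ?_⟩
  -- Part B : τ' has a zero in (a,∞)
  by_contra hno
  push_neg at hno
  have hτne : ∀ x > a, τ' x ≠ 0 := fun x hx => hno x hx
  have hkne : ∀ x > a, k x ≠ 0 := by
    intro x hx h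
    rcases div_eq_zero_iff.1 h with h1 | h2
    · exact hτne x hx h1
    · exact (hσ x hx).ne' h2
  obtain ⟨x₁, hx₁a, hx₁neg⟩ : ∃ x₁ > a, k x₁ < 0 := by
    obtain ⟨x₁, h1, h2⟩ :=
      ((eventually_gt_atTop a).and (hA.eventually (eventually_lt_atBot (0:ℝ)))).exists
    exact ⟨x₁, h1, h2⟩
  have hkneg : ∀ x > a, k x < 0 := by
    intro x hx
    rcases lt_or_gt_of_ne (hkne x hx) with h | h
    · exact h
    · exfalso
      have hsub : uIcc x x₁ ⊆ Ioi a := fun y hy =>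
        lt_of_lt_of_le (lt_min hx hx₁a) hy.1
      have hconk : ContinuousOn k (uIcc x x₁) := fun y hy =>
        (hkcont y (hsub hy)).continuousWithinAt
      have h0 : (0:ℝ) ∈ uIcc (k x) (k x₁) := by
        rw [mem_uIcc]; right; exact ⟨hx₁neg.le, h.le⟩
      obtain ⟨c, hc, hkc⟩ := intermediate_value_uIcc hconk h0
      exact hkne c (hsub hc) hkc
  have hτneg : ∀ x > a, τ' x < 0 := by
    intro x hx
    rcases div_neg_iff.1 (hkneg x hx) with ⟨_, h2⟩ | ⟨h1, _⟩
    · linarith [hσ x hx]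
    · exact h1
  -- The continuous function w = u' Tv - v' Tu
  set w : ℝ → ℝ := fun x => deriv u x * T4 r q v x - deriv v x * T4 r q u x with hwdef
  have cu' : Continuous (deriv u) := hu.continuous_deriv (by norm_num)
  have cv' : Continuous (deriv v) := hv.continuous_deriv (by norm_num)
  have cTu : Continuous (T4 r q u) := (hru.continuous_deriv (by norm_num)).sub (hqc.mul cu')
  have cTv : Continuous (T4 r q v) := (hrv.continuous_deriv (by norm_num)).sub (hqc.mul cv')
  have cw : Continuous w := (cu'.mul cTv).sub (cv'.mul cTu)
  have hwa : w a = 1 := by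
    simp only [hwdef, hu'a, hv'a, hTva, hTua]
    ring
  -- at good points, τ' = w
  have hgood : ∀ y > a, u y ≠ 0 → v y ≠ 0 → τ' y = w y := by
    intro y hy huy hvy
    have hpy : 0 < p y := hppos y hy.le
    have hdTv : DifferentiableAt ℝ (T4 r q v) y := by
      by_contra hnd
      have h0 := deriv_zero_of_not_differentiableAt hnd
      rw [hvsol y] at h0
      exact (mul_ne_zero hpy.ne' hvy) h0
    have hdTu : DifferentiableAt ℝ (T4 r q u) y := by
      by_contra hnd
      have h0 := deriv_zero_of_not_differentiableAt hnd
      rw [husol y] at h0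
      exact (mul_ne_zero hpy.ne' huy) h0
    have hTv' : HasDerivAt (T4 r q v) (p y * v y) y := by
      have := hdTv.hasDerivAt; rwa [hvsol y] at this
    have hTu' : HasDerivAt (T4 r q u) (p y * u y) y := by
      have := hdTu.hasDerivAt; rwa [husol y] at this
    have hud : HasDerivAt u (deriv u y) y := (hu.differentiable (by norm_num) y).hasDerivAt
    have hvd : HasDerivAt v (deriv v y) y := (hv.differentiable (by norm_num) y).hasDerivAt
    have hτ : HasDerivAt (tauHat r q u v)
        ((deriv u y * T4 r q v y + u y * (p y * v y)) -
         (deriv v y * T4 r q u y + v y * (p y * u y))) y := (hud.mul hTv').sub (hvd.mul hTu')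
    have hd := hτ.deriv
    rw [hτ'def, hd, hwdef]
    ring
  -- eventually near any x > a (punctured nbhd), points are good
  have hev : ∀ x > a, ∀ᶠ y in nhdsWithin x {x}ᶜ, y > a ∧ u y ≠ 0 ∧ v y ≠ 0 := by
    intro x hx
    have hmem : ∀ᶠ y in nhdsWithin x {x}ᶜ, y > a :=
      eventually_nhdsWithin_of_eventually_nhds (eventually_gt_nhds hx)
    have hune : ∀ᶠ y in nhdsWithin x {x}ᶜ, u y ≠ 0 := by
      by_cases hux : u x = 0
      · have hσx := hσ x hx
        have hu'x : deriv u x ≠ 0 := by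
          intro h
          simp only [hσdef, sigmaHat, hux, h, zero_mul, mul_zero, sub_zero, zero_sub] at hσx
          linarith
        have hslope := hasDerivAt_iff_tendsto_slope.1
          ((hu.differentiable (by norm_num) x).hasDerivAt)
        filter_upwards [hslope.eventually (eventually_ne_nhds hu'x),
          eventually_mem_nhdsWithin] with y hy hymem h0
        apply hy
        have hyx : y ≠ x := hymem
        rw [slope_def_field, h0, hux]
        simp
      · exact eventually_nhdsWithin_of_eventually_nhds
          (hu.continuous.continuousAt.eventually_ne hux)
    have hvne : ∀ᶠ y in nhdsWithin x {x}ᶜ, v y ≠ 0 := by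
      by_cases hvx : v x = 0
      · have hσx := hσ x hx
        have hv'x : deriv v x ≠ 0 := by
          intro h
          simp only [hσdef, sigmaHat, hvx, h, zero_mul, mul_zero, sub_zero, zero_sub] at hσx
          linarith
        have hslope := hasDerivAt_iff_tendsto_slope.1
          ((hv.differentiable (by norm_num) x).hasDerivAt)
        filter_upwards [hslope.eventually (eventually_ne_nhds hv'x),
          eventually_mem_nhdsWithin] with y hy hymem h0
        apply hy
        have hyx : y ≠ x := hymem
        rw [slope_def_field, h0, hvx]
        simp
      · exact eventually_nhdsWithin_of_eventually_nhds
          (hv.continuous.continuousAt.eventually_ne hvx)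
    filter_upwards [hmem, hune, hvne] with y h1 h2 h3 using ⟨h1, h2, h3⟩
  have hwle : ∀ x > a, w x ≤ 0 := by
    intro x hx
    have htend : Tendsto w (nhdsWithin x {x}ᶜ) (nhds (w x)) :=
      cw.continuousAt.tendsto.mono_left nhdsWithin_le_nhds
    refine le_of_tendsto htend ?_
    filter_upwards [hev x hx] with y hy
    obtain ⟨hy1, hy2, hy3⟩ := hy
    rw [← hgood y hy1 hy2 hy3]
    exact (hτneg y hy1).le
  have hcontr : (1:ℝ) ≤ 0 := by
    rw [← hwa]
    have htend : Tendsto w (nhdsWithin a (Ioi a)) (nhds (w a)) :=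
      cw.continuousAt.tendsto.mono_left nhdsWithin_le_nhds
    refine le_of_tendsto htend ?_
    filter_upwards [eventually_mem_nhdsWithin] with y hy using hwle y hy
  linarith
end
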